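/- arXiv:1112.4009 — 3 statements merged into one kernel-verified Lean document; each statement's English description precedes it below -/
import Mathlib

section
/- Let K_0(z) := ∫_0^∞ e^{−z·cosh u} du for z > 0. Then for every x ∈ ℝ, lim_{β→∞} β^{−1}·K_0(e^{−βx}) = max(x, 0). -/
open MeasureTheory Filter Topology

/-- Macdonald function of order zero: `K₀(z) = ∫_0^∞ e^{-z cosh u} du`. -/
noncomputable def K0 (z : ℝ) : ℝ := ∫ u in Set.Ioi (0:ℝ), Real.exp (-(z * Real.cosh u))

open Set Real

lemma cosh_le_exp_self {u : ℝ} (hu : 0 ≤ u) : Real.cosh u ≤ Real.exp u := by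
  rw [Real.cosh_eq]
  have : Real.exp (-u) ≤ Real.exp u := Real.exp_le_exp.2 (by linarith)
  linarith

lemma half_exp_le_cosh (u : ℝ) : Real.exp u / 2 ≤ Real.cosh u := by
  rw [Real.cosh_eq]
  have := Real.exp_pos (-u)
  linarith

lemma K0_integrableOn {c : ℝ} (hc : 0 < c) :
    IntegrableOn (fun u => Real.exp (-(c * Real.cosh u))) (Ioi (0:ℝ)) := by
  apply ((exp_neg_integrableOn_Ioi 0 (by positivity : (0:ℝ) < c/2)).mono'
    (Continuous.aestronglyMeasurable (by continuity)))
  filter_upwards [ae_restrict_mem measurableSet_Ioi] with u hu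
  rw [Real.norm_eq_abs, abs_of_pos (Real.exp_pos _), Real.exp_le_exp]
  have h1 : Real.exp u / 2 ≤ Real.cosh u := half_exp_le_cosh u
  have h2 : u ≤ Real.exp u := (Real.add_one_le_exp u).trans' (by linarith)
  nlinarith [Real.exp_pos u, (Set.mem_Ioi.mp hu).le]

lemma exp_integrableOn {c : ℝ} (hc : 0 < c) :
    IntegrableOn (fun u => Real.exp (-(c * Real.exp u))) (Ioi (0:ℝ)) := by
  apply ((exp_neg_integrableOn_Ioi 0 hc).mono'
    (Continuous.aestronglyMeasurable (by continuity)))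
  filter_upwards [ae_restrict_mem measurableSet_Ioi] with u hu
  rw [Real.norm_eq_abs, abs_of_pos (Real.exp_pos _), Real.exp_le_exp]
  have h2 : u ≤ Real.exp u := (Real.add_one_le_exp u).trans' (by linarith)
  nlinarith [(Set.mem_Ioi.mp hu).le]

lemma K0_lower {z : ℝ} (hz : 0 < z) (hz1 : z ≤ 1) : -Real.log z - 1 ≤ K0 z := by
  set L := -Real.log z with hL
  have hL0 : 0 ≤ L := by
    simp only [hL, neg_nonneg]
    exact Real.log_nonpos hz.le hz1
  have hexpL : Real.exp L = z⁻¹ := by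
    rw [hL, Real.exp_neg, Real.exp_log hz]
  have step1 : ∫ u in Ioc (0:ℝ) L, Real.exp (-(z * Real.cosh u)) ≤ K0 z := by
    apply setIntegral_mono_set (K0_integrableOn hz)
    · filter_upwards with u using (Real.exp_pos _).le
    · exact Filter.Eventually.of_forall Ioc_subset_Ioi_self
  have step2 : ∫ u in Ioc (0:ℝ) L, (1 - z * Real.exp u) ≤
      ∫ u in Ioc (0:ℝ) L, Real.exp (-(z * Real.cosh u)) := by
    apply setIntegral_mono_on
    · exact (Continuous.integrableOn_Ioc (by continuity))
    · exact (Continuous.integrableOn_Ioc (by continuity))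
    · exact measurableSet_Ioc
    · intro u hu
      have h1 : Real.cosh u ≤ Real.exp u := cosh_le_exp_self hu.1.le
      have h2 : 1 - z * Real.exp u ≤ Real.exp (-(z * Real.exp u)) := by
        have := Real.add_one_le_exp (-(z * Real.exp u)); linarith
      have h3 : Real.exp (-(z * Real.exp u)) ≤ Real.exp (-(z * Real.cosh u)) := by
        rw [Real.exp_le_exp]; nlinarith
      linarith
  have step3 : ∫ u in Ioc (0:ℝ) L, (1 - z * Real.exp u) = L - 1 + z := by
    rw [← intervalIntegral.integral_of_le hL0]
    rw [intervalIntegral.integral_sub intervalIntegrable_const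
      ((intervalIntegral.intervalIntegrable_exp.const_mul z))]
    rw [intervalIntegral.integral_const_mul, integral_exp]
    rw [hexpL]
    simp
    field_simp
    ring
  linarith [step1, step2, step3.ge.trans step2]

lemma K0_upper {z : ℝ} (hz : 0 < z) (hz2 : z ≤ 2) : K0 z ≤ (Real.log 2 - Real.log z) + 1 := by
  set T := Real.log 2 - Real.log z with hT
  have hT0 : 0 ≤ T := by
    rw [hT, sub_nonneg]
    exact Real.log_le_log hz hz2
  have hexpT : Real.exp T = 2 / z := by
    rw [hT, Real.exp_sub, Real.exp_log hz, Real.exp_log (by norm_num)]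
  have hc : 0 < z / 2 := by linarith
  -- K0 z ≤ ∫ exp(-(z/2 * exp u))
  have step1 : K0 z ≤ ∫ u in Ioi (0:ℝ), Real.exp (-(z/2 * Real.exp u)) := by
    apply setIntegral_mono_on (K0_integrableOn hz) (exp_integrableOn hc) measurableSet_Ioi
    intro u hu
    rw [Real.exp_le_exp]
    have := half_exp_le_cosh u
    nlinarith
  have hsplit : Ioc (0:ℝ) T ∪ Ioi T = Ioi (0:ℝ) := Ioc_union_Ioi_eq_Ioi hT0
  have hint : IntegrableOn (fun u => Real.exp (-(z/2 * Real.exp u))) (Ioi (0:ℝ)) :=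
    exp_integrableOn hc
  have step2 : ∫ u in Ioi (0:ℝ), Real.exp (-(z/2 * Real.exp u)) =
      (∫ u in Ioc (0:ℝ) T, Real.exp (-(z/2 * Real.exp u))) +
      ∫ u in Ioi T, Real.exp (-(z/2 * Real.exp u)) := by
    rw [← setIntegral_union (by rw [Set.disjoint_iff]; rintro u ⟨h1, h2⟩; exact absurd h2.out h1.2.not_gt) measurableSet_Ioi
      (hint.mono_set (hsplit ▸ subset_union_left)) (hint.mono_set (hsplit ▸ subset_union_right)), hsplit]
  have step3 : ∫ u in Ioc (0:ℝ) T, Real.exp (-(z/2 * Real.exp u)) ≤ T := by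
    calc ∫ u in Ioc (0:ℝ) T, Real.exp (-(z/2 * Real.exp u))
        ≤ ∫ _u in Ioc (0:ℝ) T, (1:ℝ) := by
          apply setIntegral_mono_on (hint.mono_set (hsplit ▸ subset_union_left))
            (integrableOn_const measure_Ioc_lt_top.ne) measurableSet_Ioc
          intro u _
          calc Real.exp (-(z/2 * Real.exp u)) ≤ Real.exp 0 := by
                rw [Real.exp_le_exp]
                have := Real.exp_pos u
                nlinarith
            _ = 1 := Real.exp_zero
      _ = T := by simp [Real.volume_Ioc, hT0]
  have hzT : z / 2 = Real.exp (-T) := by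
    rw [Real.exp_neg, hexpT]
    field_simp
  have step4 : ∫ u in Ioi T, Real.exp (-(z/2 * Real.exp u)) ≤ 1 := by
    have hg : IntegrableOn (fun u => Real.exp (T - 1) * Real.exp (-u)) (Ioi T) := by
      have := (exp_neg_integrableOn_Ioi T (by norm_num : (0:ℝ) < 1)).const_mul (Real.exp (T-1))
      simpa [IntegrableOn] using this
    calc ∫ u in Ioi T, Real.exp (-(z/2 * Real.exp u))
        ≤ ∫ u in Ioi T, Real.exp (T - 1) * Real.exp (-u) := by
          apply setIntegral_mono_on (hint.mono_set (hsplit ▸ subset_union_right)) hg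
            measurableSet_Ioi
          intro u hu
          rw [← Real.exp_add, Real.exp_le_exp, hzT, ← Real.exp_add]
          have h1 : 1 + (u - T) ≤ Real.exp (-T + u) := by
            have := Real.add_one_le_exp (u - T)
            rw [show -T + u = u - T by ring]
            linarith
          linarith
      _ = Real.exp (T - 1) * Real.exp (-T) := by
          rw [integral_const_mul, integral_exp_neg_Ioi]
      _ = Real.exp (-1) := by rw [← Real.exp_add]; ring_nf
      _ ≤ 1 := by
          rw [Real.exp_le_one_iff]; norm_num
  calc K0 z ≤ _ := step1
    _ = _ := step2
    _ ≤ T + 1 := add_le_add step3 step4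
    _ = (Real.log 2 - Real.log z) + 1 := by rw [hT]

lemma K0_nonneg (z : ℝ) : 0 ≤ K0 z :=
  setIntegral_nonneg measurableSet_Ioi (fun u _ => (Real.exp_pos _).le)

lemma K0_le_K0_one {z : ℝ} (hz : 1 ≤ z) : K0 z ≤ K0 1 := by
  apply setIntegral_mono_on (K0_integrableOn (by linarith))
    (K0_integrableOn one_pos) measurableSet_Ioi
  intro u _
  rw [Real.exp_le_exp]
  have := Real.one_le_cosh u
  nlinarith

/-- For every `x ∈ ℝ`, `lim_{β→∞} β⁻¹ K₀(e^{-βx}) = max(x,0)`. -/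
theorem K0_scaling_limit (x : ℝ) :
    Tendsto (fun β : ℝ => β⁻¹ * K0 (Real.exp (-(β * x)))) atTop (𝓝 (max x 0)) := by
  rcases le_or_gt x 0 with hx | hx
  · rw [max_eq_right hx]
    have hlim : Tendsto (fun β : ℝ => β⁻¹ * (K0 1)) atTop (𝓝 0) := by
      simpa using tendsto_inv_atTop_zero.mul_const (K0 1)
    apply tendsto_of_tendsto_of_tendsto_of_le_of_le' tendsto_const_nhds hlim
    · filter_upwards [eventually_ge_atTop (1:ℝ)] with β hβ
      have hβ0 : (0:ℝ) < β := by linarith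
      exact mul_nonneg (by positivity) (K0_nonneg _)
    · filter_upwards [eventually_ge_atTop (1:ℝ)] with β hβ
      have hβ0 : 0 < β := by linarith
      have hz : 1 ≤ Real.exp (-(β * x)) := by
        rw [Real.one_le_exp_iff]; nlinarith
      exact mul_le_mul_of_nonneg_left (K0_le_K0_one hz) (by positivity)
  · rw [max_eq_left hx.le]
    have hlow : Tendsto (fun β : ℝ => x - β⁻¹) atTop (𝓝 x) := by
      simpa using (tendsto_const_nhds : Tendsto (fun _:ℝ => x) atTop (𝓝 x)).sub tendsto_inv_atTop_zero
    have hup : Tendsto (fun β : ℝ => x + β⁻¹ * (Real.log 2 + 1)) atTop (𝓝 x) := by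
      simpa using (tendsto_const_nhds : Tendsto (fun _:ℝ => x) atTop (𝓝 x)).add (tendsto_inv_atTop_zero.mul_const (Real.log 2 + 1))
    apply tendsto_of_tendsto_of_tendsto_of_le_of_le' hlow hup
    · filter_upwards [eventually_ge_atTop (1:ℝ)] with β hβ
      have hβ0 : 0 < β := by linarith
      have hz : Real.exp (-(β * x)) ≤ 1 := by
        rw [Real.exp_le_one_iff]; nlinarith
      have := K0_lower (Real.exp_pos (-(β * x))) hz
      rw [Real.log_exp] at this
      have h2 : β * x - 1 ≤ K0 (Real.exp (-(β * x))) := by linarith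
      calc x - β⁻¹ = β⁻¹ * (β * x - 1) := by field_simp
        _ ≤ β⁻¹ * K0 (Real.exp (-(β * x))) :=
            mul_le_mul_of_nonneg_left h2 (by positivity)
    · filter_upwards [eventually_ge_atTop (1:ℝ)] with β hβ
      have hβ0 : 0 < β := by linarith
      have hz : Real.exp (-(β * x)) ≤ 2 := by
        have : Real.exp (-(β * x)) ≤ 1 := by rw [Real.exp_le_one_iff]; nlinarith
        linarith
      have := K0_upper (Real.exp_pos (-(β * x))) hz
      rw [Real.log_exp] at this
      calc β⁻¹ * K0 (Real.exp (-(β * x)))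
          ≤ β⁻¹ * (Real.log 2 + β * x + 1) := by
            apply mul_le_mul_of_nonneg_left _ (by positivity)
            linarith
        _ = x + β⁻¹ * (Real.log 2 + 1) := by field_simp; ring
end

section
/- For x ∈ W_N, the Lebesgue volume of the set of real triangular arrays (T_{j,k})_{1≤k≤j≤N−1} ∈ ℝ^{N(N−1)/2} satisfying the Gelfand–Tsetlin interlacing conditions T_{j+1,k} ≤ T_{j,k} ≤ T_{j+1,k+1} for all 1 ≤ k ≤ j ≤ N−1 (with the convention T_{N,k} := x_k) equals h_N(x) / ∏_{j=1}^{N−1} j!. -/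
open MeasureTheory Filter Topology

open Finset Nat

/-- Index set of real triangular arrays `(T_{j,k})_{1 ≤ k ≤ j ≤ N-1}` (0-based rows `0,…,N-2`,
row `j` having entries `k = 0,…,j`). -/
def TriIdx (N : ℕ) : Type :=
  {p : Fin N × Fin N // p.1.val < N - 1 ∧ p.2.val ≤ p.1.val}

noncomputable instance (N : ℕ) : Fintype (TriIdx N) := by
  unfold TriIdx; infer_instance

/-- Entry `T_{j,k}` (0-based) of the triangular array `T` completed by the bottom row
`T_{N-1,k} := x_k`; junk value `0` out of range. -/
noncomputable def ent (N : ℕ) (T : TriIdx N → ℝ) (x : Fin N → ℝ) (j k : ℕ) : ℝ :=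
  if h : j < N - 1 ∧ k ≤ j then
    T ⟨(⟨j, by omega⟩, ⟨k, by omega⟩), ⟨h.1, h.2⟩⟩
  else if h2 : j = N - 1 ∧ k < N then x ⟨k, h2.2⟩ else 0

/-- The Vandermonde product `h_N(x) = ∏_{j<k} (x_k - x_j)`. -/
noncomputable def hVdm (N : ℕ) (x : Fin N → ℝ) : ℝ :=
  ∏ j : Fin N, ∏ k ∈ Finset.Ioi j, (x k - x j)

lemma prod_fin_factorial (n : ℕ) :
    (∏ i : Fin (n+1), (if (i:ℕ) = 0 then (1:ℝ) else (i:ℕ))) = n ! := by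
  induction n with
  | zero => simp
  | succ m ih =>
    rw [Fin.prod_univ_castSucc]
    have h1 : ∀ i : Fin (m+1), ((i.castSucc : Fin (m+2)) : ℕ) = (i : ℕ) := fun i => rfl
    simp only [h1] at *
    rw [ih]
    have : ((Fin.last (m+1) : Fin (m+2)) : ℕ) = m + 1 := rfl
    rw [this]
    simp [Nat.factorial_succ]
    push_cast
    ring

lemma det_diff (n : ℕ) (x : Fin (n+1) → ℝ) :
    Matrix.det (Matrix.of fun i j : Fin n =>
        (x j.succ ^ ((i:ℕ)+1) - x j.castSucc ^ ((i:ℕ)+1)) / ((i:ℕ)+1))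
      = (Matrix.vandermonde x).det / n ! := by
  classical
  set d : Fin (n+1) → ℝ := fun i => if (i:ℕ) = 0 then 1 else (i:ℕ) with hd
  have hd0 : ∀ i : Fin (n+1), d i ≠ 0 := by
    intro i; simp only [hd]; split_ifs with h
    · norm_num
    · exact_mod_cast h
  set C : Matrix (Fin (n+1)) (Fin (n+1)) ℝ :=
    Matrix.of fun j i => x j ^ (i:ℕ) / d i with hC
  -- det C = det vandermonde / n!
  have hCdet : C.det = (Matrix.vandermonde x).det / n ! := by
    have : C = (Matrix.vandermonde x) * Matrix.diagonal (fun i => (d i)⁻¹) := by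
      ext j i
      simp [hC, Matrix.mul_diagonal, Matrix.vandermonde, div_eq_mul_inv]
    rw [this, Matrix.det_mul, Matrix.det_diagonal]
    have hprod : (∏ i : Fin (n+1), (d i)⁻¹) = ((n ! : ℝ))⁻¹ := by
      rw [← prod_fin_factorial n, ← Finset.prod_inv_distrib]
    rw [hprod, div_eq_mul_inv]
  set L : Matrix (Fin (n+1)) (Fin (n+1)) ℝ :=
    Matrix.of fun j k => if j = k then 1 else if (k:ℕ)+1 = (j:ℕ) then -1 else 0 with hL
  have hLdet : L.det = 1 := by
    rw [Matrix.det_of_lowerTriangular L]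
    · simp [hL]
    · intro i j hij
      simp only [OrderDual.toDual_lt_toDual] at hij
      have h1 : i ≠ j := by intro h; subst h; exact lt_irrefl _ hij
      have h2 : ¬ ((j:ℕ)+1 = (i:ℕ)) := by omega
      simp [hL, h1, h2]
  set D := L * C with hD
  have hDdet : D.det = C.det := by rw [hD, Matrix.det_mul, hLdet, one_mul]
  -- entries of D
  have hDsucc : ∀ (m : Fin n) (i : Fin (n+1)),
      D m.succ i = C m.succ i - C m.castSucc i := by
    intro m i
    have hrow : ∀ k : Fin (n+1), L m.succ k =
        (if k = m.succ then (1:ℝ) else 0) - (if k = m.castSucc then 1 else 0) := by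
      intro k
      simp only [hL, Matrix.of_apply]
      have hsc : (m.succ : Fin (n+1)) ≠ m.castSucc := by
        intro hh; have := congrArg Fin.val hh; simp at this
      rcases eq_or_ne k m.succ with h | h
      · subst h
        rw [if_pos rfl, if_pos rfl, if_neg hsc]; ring
      · rcases eq_or_ne k m.castSucc with h2 | h2
        · subst h2
          have h4 : ((m.castSucc : Fin (n+1)):ℕ) + 1 = ((m.succ : Fin (n+1)):ℕ) := by simp
          rw [if_neg hsc, if_pos h4, if_neg h, if_pos rfl]; ring
        · have h3 : m.succ ≠ k := fun hh => h hh.symm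
          have h4 : ¬ ((k:ℕ)+1 = ((m.succ : Fin (n+1)):ℕ)) := by
            rw [Fin.val_succ]
            intro hh
            apply h2
            apply Fin.ext
            rw [Fin.coe_castSucc]
            omega
          rw [if_neg h3, if_neg h4, if_neg h, if_neg h2]; ring
    rw [hD]
    simp only [Matrix.mul_apply]
    calc ∑ k, L m.succ k * C k i
        = ∑ k, ((if k = m.succ then (1:ℝ) else 0) * C k i
            - (if k = m.castSucc then 1 else 0) * C k i) := by
          apply Finset.sum_congr rfl; intro k _; rw [hrow]; ring
      _ = C m.succ i - C m.castSucc i := by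
          rw [Finset.sum_sub_distrib]
          simp [Finset.sum_ite_eq']
  have hD0 : ∀ i : Fin (n+1), D 0 i = C 0 i := by
    intro i
    rw [hD]
    simp only [Matrix.mul_apply]
    have : ∀ k : Fin (n+1), L 0 k = if k = 0 then (1:ℝ) else 0 := by
      intro k
      simp only [hL, Matrix.of_apply]
      rcases eq_or_ne k 0 with h | h
      · subst h; simp
      · have h1 : (0 : Fin (n+1)) ≠ k := fun hh => h hh.symm
        have h2 : ¬ ((k:ℕ)+1 = ((0:Fin (n+1)):ℕ)) := by simp
        simp [h1, h2, h]
    simp only [this]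
    simp [Finset.sum_ite_eq']
  -- expand along column 0
  have hcol : ∀ i : Fin (n+1), D i 0 = if i = 0 then 1 else 0 := by
    intro i
    rcases Fin.eq_zero_or_eq_succ i with h | ⟨m, rfl⟩
    · subst h; rw [hD0]; simp [hC, hd]
    · rw [hDsucc]
      have : (m.succ : Fin (n+1)) ≠ 0 := Fin.succ_ne_zero m
      simp [hC, hd, this]
  have hexp : D.det = (D.submatrix Fin.succ Fin.succ).det := by
    rw [Matrix.det_succ_column_zero]
    rw [Finset.sum_eq_single 0]
    · simp [hcol, Fin.succAbove_zero]
    · intro i _ hi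
      simp [hcol, hi]
    · simp
  have hsub : D.submatrix Fin.succ Fin.succ =
      (Matrix.of fun i j : Fin n =>
        (x j.succ ^ ((i:ℕ)+1) - x j.castSucc ^ ((i:ℕ)+1)) / ((i:ℕ)+1)).transpose := by
    ext j i
    rw [Matrix.submatrix_apply, hDsucc]
    have hds : d i.succ = ((i:ℕ):ℝ) + 1 := by
      have h1 : ((i.succ : Fin (n+1)):ℕ) = (i:ℕ)+1 := rfl
      simp only [hd, h1]
      norm_num
    simp only [hC, Matrix.of_apply, Matrix.transpose_apply]
    rw [hds]
    have h1 : ((i.succ : Fin (n+1)):ℕ) = (i:ℕ)+1 := rfl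
    rw [h1]
    ring
  rw [← hCdet, ← hDdet, hexp, hsub, Matrix.det_transpose]

lemma hVdm_eq_det (n : ℕ) (y : Fin n → ℝ) :
    hVdm n y = (Matrix.vandermonde y).det := (Matrix.det_vandermonde y).symm

-- expansion of hVdm as sum over permutations
lemma hVdm_perm_sum (n : ℕ) (y : Fin n → ℝ) :
    hVdm n y = ∑ σ : Equiv.Perm (Fin n),
      (Equiv.Perm.sign σ : ℤ) * ∏ i : Fin n, y i ^ ((σ i : ℕ)) := by
  rw [hVdm_eq_det, ← Matrix.det_transpose, Matrix.det_apply']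
  apply Finset.sum_congr rfl
  intro σ _
  simp [Matrix.vandermonde]

noncomputable def gtBox (n : ℕ) (x : Fin (n+1) → ℝ) : Set (Fin n → ℝ) :=
  Set.univ.pi fun k => Set.Icc (x k.castSucc) (x k.succ)

lemma isCompact_gtBox (n : ℕ) (x : Fin (n+1) → ℝ) : IsCompact (gtBox n x) :=
  isCompact_univ_pi fun _ => isCompact_Icc

lemma measurableSet_gtBox (n : ℕ) (x : Fin (n+1) → ℝ) : MeasurableSet (gtBox n x) :=
  MeasurableSet.univ_pi fun _ => measurableSet_Icc

lemma continuous_hVdm (n : ℕ) : Continuous (hVdm n) := by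
  unfold hVdm
  exact continuous_finset_prod _ fun j _ => continuous_finset_prod _ fun k _ =>
    (continuous_apply k).sub (continuous_apply j)

lemma integral_pow_Icc (a b : ℝ) (h : a ≤ b) (m : ℕ) :
    ∫ t in Set.Icc a b, t ^ m = (b ^ (m+1) - a ^ (m+1)) / (m+1) := by
  rw [MeasureTheory.integral_Icc_eq_integral_Ioc, ← intervalIntegral.integral_of_le h,
    integral_pow]

lemma key_integral (n : ℕ) (x : Fin (n+1) → ℝ) (hx : Monotone x) :
    ∫ y in gtBox n x, hVdm n y = hVdm (n+1) x / n ! := by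
  classical
  have hint : ∀ e : Fin n → ℕ, IntegrableOn (fun y : Fin n → ℝ => ∏ i, y i ^ (e i))
      (gtBox n x) volume := by
    intro e
    apply ContinuousOn.integrableOn_compact (isCompact_gtBox n x)
    exact (continuous_finset_prod _ fun i _ => (continuous_apply i).pow (e i)).continuousOn
  have step1 : ∫ y in gtBox n x, hVdm n y
      = ∑ σ : Equiv.Perm (Fin n), ((Equiv.Perm.sign σ : ℤ) : ℝ) *
          ∫ y in gtBox n x, ∏ i, y i ^ ((σ i : ℕ)) := by
    simp_rw [hVdm_perm_sum]
    rw [integral_finset_sum]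
    · apply Finset.sum_congr rfl
      intro σ _
      simp_rw [← smul_eq_mul (α := ℝ)]
      rw [integral_smul]
    · intro σ _
      exact (hint fun i => (σ i : ℕ)).const_mul _
  have step2 : ∀ e : Fin n → ℕ,
      ∫ y in gtBox n x, ∏ i, y i ^ (e i)
        = ∏ i : Fin n, (x i.succ ^ (e i + 1) - x i.castSucc ^ (e i + 1)) / (e i + 1) := by
    intro e
    have hind : ∀ y : Fin n → ℝ,
        Set.indicator (gtBox n x) (fun y : Fin n → ℝ => ∏ i, y i ^ (e i)) y
          = ∏ i, Set.indicator (Set.Icc (x i.castSucc) (x i.succ)) (fun t => t ^ (e i)) (y i) := by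
      intro y
      by_cases hy : y ∈ gtBox n x
      · rw [Set.indicator_of_mem hy]
        apply Finset.prod_congr rfl
        intro i _
        rw [Set.indicator_of_mem (hy i (Set.mem_univ i))]
      · rw [Set.indicator_of_notMem hy]
        have hy' : ¬ ∀ i, y i ∈ Set.Icc (x i.castSucc) (x i.succ) :=
          fun h => hy (fun i _ => h i)
        obtain ⟨i, hi⟩ := not_forall.mp hy'
        refine (Finset.prod_eq_zero (Finset.mem_univ i) ?_).symm
        rw [Set.indicator_of_notMem hi]
    rw [← integral_indicator (measurableSet_gtBox n x)]
    simp_rw [hind]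
    rw [MeasureTheory.integral_fintype_prod_volume_eq_prod (ι := Fin n) (f := fun i (t:ℝ) =>
      Set.indicator (Set.Icc (x i.castSucc) (x i.succ)) (fun t => t ^ (e i)) t)]
    apply Finset.prod_congr rfl
    intro i _
    rw [integral_indicator measurableSet_Icc,
      integral_pow_Icc _ _ (hx (Fin.castSucc_le_succ i)) (e i)]
  calc ∫ y in gtBox n x, hVdm n y
      = ∑ σ : Equiv.Perm (Fin n), ((Equiv.Perm.sign σ : ℤ) : ℝ) *
          ∏ i : Fin n, (x i.succ ^ ((σ i : ℕ) + 1) - x i.castSucc ^ ((σ i : ℕ) + 1)) / ((σ i : ℕ) + 1) := by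
        rw [step1]
        apply Finset.sum_congr rfl
        intro σ _
        rw [step2 (fun i => (σ i : ℕ))]
    _ = (Matrix.of fun i j : Fin n =>
          (x j.succ ^ ((i:ℕ)+1) - x j.castSucc ^ ((i:ℕ)+1)) / ((i:ℕ)+1)).det := by
        rw [Matrix.det_apply']
        apply Finset.sum_congr rfl
        intro σ _
        simp
    _ = hVdm (n+1) x / n ! := by
        rw [det_diff, ← hVdm_eq_det]

lemma hVdm_nonneg {n : ℕ} {y : Fin n → ℝ} (hy : Monotone y) : 0 ≤ hVdm n y := by
  apply Finset.prod_nonneg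
  intro j _
  apply Finset.prod_nonneg
  intro k hk
  have : j ≤ k := le_of_lt (Finset.mem_Ioi.mp hk)
  linarith [hy this]
def GTset (N : ℕ) (x : Fin N → ℝ) : Set (TriIdx N → ℝ) :=
  {T : TriIdx N → ℝ | ∀ j k : ℕ, j < N - 1 → k ≤ j →
      ent N T x (j + 1) k ≤ ent N T x j k ∧ ent N T x j k ≤ ent N T x (j + 1) (k + 1)}

def idxT (N j k : ℕ) (h1 : j < N - 1) (h2 : k ≤ j) : TriIdx N :=
  ⟨(⟨j, by omega⟩, ⟨k, by omega⟩), ⟨h1, h2⟩⟩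

lemma ent_int (N : ℕ) (T : TriIdx N → ℝ) (x : Fin N → ℝ) {j k : ℕ}
    (h1 : j < N - 1) (h2 : k ≤ j) :
    ent N T x j k = T (idxT N j k h1 h2) := by
  rw [ent, dif_pos ⟨h1, h2⟩]
  rfl

lemma ent_last (N : ℕ) (T : TriIdx N → ℝ) (x : Fin N → ℝ) {k : ℕ} (hk : k < N) :
    ent N T x (N - 1) k = x ⟨k, hk⟩ := by
  rw [ent, dif_neg (by omega), dif_pos ⟨rfl, hk⟩]

lemma continuous_entz (N : ℕ) (j k : ℕ) :
    Continuous (fun z : (Fin N → ℝ) × (TriIdx N → ℝ) => ent N z.2 z.1 j k) := by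
  by_cases h : j < N - 1 ∧ k ≤ j
  · simp only [ent, dif_pos h]
    exact (continuous_apply _).comp continuous_snd
  · by_cases h2 : j = N - 1 ∧ k < N
    · simp only [ent, dif_neg h, dif_pos h2]
      exact (continuous_apply _).comp continuous_fst
    · simp only [ent, dif_neg h, dif_neg h2]
      exact continuous_const

lemma measurableSet_GT_pair (N : ℕ) :
    MeasurableSet {z : (Fin N → ℝ) × (TriIdx N → ℝ) | z.2 ∈ GTset N z.1} := by
  have hrw : {z : (Fin N → ℝ) × (TriIdx N → ℝ) | z.2 ∈ GTset N z.1}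
      = ⋂ (j : ℕ) (k : ℕ), {z : (Fin N → ℝ) × (TriIdx N → ℝ) | j < N - 1 → k ≤ j →
          (ent N z.2 z.1 (j+1) k ≤ ent N z.2 z.1 j k ∧
            ent N z.2 z.1 j k ≤ ent N z.2 z.1 (j+1) (k+1))} := by
    ext z
    simp only [Set.mem_iInter, Set.mem_setOf_eq, GTset]
  rw [hrw]
  refine MeasurableSet.iInter fun j => MeasurableSet.iInter fun k => ?_
  by_cases h1 : j < N - 1
  · by_cases h2 : k ≤ j
    · have : {z : (Fin N → ℝ) × (TriIdx N → ℝ) | j < N - 1 → k ≤ j →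
          (ent N z.2 z.1 (j+1) k ≤ ent N z.2 z.1 j k ∧
            ent N z.2 z.1 j k ≤ ent N z.2 z.1 (j+1) (k+1))}
          = {z | ent N z.2 z.1 (j+1) k ≤ ent N z.2 z.1 j k} ∩
            {z | ent N z.2 z.1 j k ≤ ent N z.2 z.1 (j+1) (k+1)} := by
        ext z; simp [h1, h2, and_comm]
      rw [this]
      exact (measurableSet_le (continuous_entz N (j+1) k).measurable
          (continuous_entz N j k).measurable).inter
        (measurableSet_le (continuous_entz N j k).measurable
          (continuous_entz N (j+1) (k+1)).measurable)
    · have : {z : (Fin N → ℝ) × (TriIdx N → ℝ) | j < N - 1 → k ≤ j →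
          (ent N z.2 z.1 (j+1) k ≤ ent N z.2 z.1 j k ∧
            ent N z.2 z.1 j k ≤ ent N z.2 z.1 (j+1) (k+1))} = Set.univ := by
        ext z; simp [h2]
      rw [this]; exact MeasurableSet.univ
  · have : {z : (Fin N → ℝ) × (TriIdx N → ℝ) | j < N - 1 → k ≤ j →
        (ent N z.2 z.1 (j+1) k ≤ ent N z.2 z.1 j k ∧
            ent N z.2 z.1 j k ≤ ent N z.2 z.1 (j+1) (k+1))} = Set.univ := by
      ext z; simp [h1]
    rw [this]; exact MeasurableSet.univ

lemma null_eval (n : ℕ) (k : Fin n) (c : ℝ) :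
    MeasureTheory.volume {y : Fin n → ℝ | y k = c} = 0 := by
  classical
  have hrw : {y : Fin n → ℝ | y k = c}
      = Set.univ.pi (fun i => if i = k then ({c} : Set ℝ) else Set.univ) := by
    ext y
    constructor
    · intro h i _
      by_cases hik : i = k
      · subst hik; simpa using h
      · simp [hik]
    · intro h
      have := h k (Set.mem_univ k)
      simpa using this
  rw [hrw, MeasureTheory.volume_pi_pi]
  apply Finset.prod_eq_zero (Finset.mem_univ k)
  simp
def lastIdx (M : ℕ) (k : Fin (M+1)) : TriIdx (M+2) :=
  ⟨(⟨M, by omega⟩, ⟨k.val, Nat.lt_succ_of_lt k.isLt⟩),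
    ⟨show M < M+2-1 by omega, show k.val ≤ M from Nat.lt_succ_iff.mp k.isLt⟩⟩

def inIdx (M : ℕ) (q : TriIdx (M+1)) : TriIdx (M+2) :=
  ⟨(⟨q.1.1.val, Nat.lt_succ_of_lt q.1.1.isLt⟩, ⟨q.1.2.val, Nat.lt_succ_of_lt q.1.2.isLt⟩),
    ⟨show q.1.1.val < M+2-1 from q.1.1.isLt, q.2.2⟩⟩

def eLast (M : ℕ) : {q : TriIdx (M+2) // q.1.1.val = M} ≃ Fin (M+1) where
  toFun q := ⟨q.1.1.2.val, by have h1 := q.1.2.2; have h2 := q.2; omega⟩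
  invFun k := ⟨lastIdx M k, rfl⟩
  left_inv q := by
    apply Subtype.ext
    apply Subtype.ext
    have h2 := q.2
    apply Prod.ext
    · exact Fin.ext (by simp [lastIdx]; omega)
    · exact Fin.ext rfl
  right_inv k := Fin.ext rfl

def eIn (M : ℕ) : {q : TriIdx (M+2) // ¬ q.1.1.val = M} ≃ TriIdx (M+1) where
  toFun q :=
    ⟨(⟨q.1.1.1.val, by have h1 := q.1.2.1; have h2 := q.2; omega⟩,
      ⟨q.1.1.2.val, by have h1 := q.1.2.1; have h2 := q.2; have h3 := q.1.2.2; omega⟩),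
      ⟨show q.1.1.1.val < M+1-1 by have h1 := q.1.2.1; have h2 := q.2; omega, q.1.2.2⟩⟩
  invFun q := ⟨inIdx M q, by have h1 := q.2.1; show ¬ q.1.1.val = M; omega⟩
  left_inv q := by
    apply Subtype.ext
    apply Subtype.ext
    apply Prod.ext
    · exact Fin.ext rfl
    · exact Fin.ext rfl
  right_inv q := by
    apply Subtype.ext
    apply Prod.ext
    · exact Fin.ext rfl
    · exact Fin.ext rfl

def yOf (M : ℕ) (T : TriIdx (M+2) → ℝ) : Fin (M+1) → ℝ := fun k => T (lastIdx M k)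

def TinOf (M : ℕ) (T : TriIdx (M+2) → ℝ) : TriIdx (M+1) → ℝ := fun q => T (inIdx M q)

lemma entA (M : ℕ) (x : Fin (M+2) → ℝ) (T : TriIdx (M+2) → ℝ) (j k : ℕ)
    (hj : j ≤ M) (hk : k ≤ j) :
    ent (M+1) (TinOf M T) (yOf M T) j k = ent (M+2) T x j k := by
  rcases Nat.lt_or_ge j M with hlt | hge
  · rw [ent_int (M+1) _ _ (show j < M+1-1 by omega) hk,
        ent_int (M+2) _ _ (show j < M+2-1 by omega) hk]
    rfl
  · have hjM : j = M := le_antisymm hj hge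
    rw [hjM] at hk ⊢
    have hkM : k < M + 1 := by omega
    rw [ent_int (M+2) T x (show M < M+2-1 by omega) hk,
        ent, dif_neg (by omega), dif_pos ⟨by omega, hkM⟩]
    rfl

lemma entRowM (M : ℕ) (x : Fin (M+2) → ℝ) (T : TriIdx (M+2) → ℝ) (k : ℕ) (hk : k ≤ M) :
    ent (M+2) T x M k = yOf M T ⟨k, by omega⟩ := by
  rw [← entA M x T M k le_rfl hk, ent, dif_neg (by omega), dif_pos ⟨by omega, by omega⟩]

lemma entRowTop (M : ℕ) (x : Fin (M+2) → ℝ) (T : TriIdx (M+2) → ℝ) (k : ℕ) (hk : k ≤ M+1) :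
    ent (M+2) T x (M+1) k = x ⟨k, by omega⟩ := by
  rw [ent, dif_neg (by omega), dif_pos ⟨by omega, by omega⟩]

lemma step_mem (M : ℕ) (x : Fin (M+2) → ℝ) (T : TriIdx (M+2) → ℝ) :
    T ∈ GTset (M+2) x ↔
      (yOf M T ∈ gtBox (M+1) x ∧ TinOf M T ∈ GTset (M+1) (yOf M T)) := by
  constructor
  · intro h
    refine ⟨?_, ?_⟩
    · intro k _
      have hk : k.val ≤ M := Nat.lt_succ_iff.mp k.isLt
      obtain ⟨hl, hr⟩ := h M k.val (by omega) hk
      rw [entRowTop M x T k.val (by omega), entRowTop M x T (k.val+1) (by omega),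
          entRowM M x T k.val hk] at *
      have c1 : x k.castSucc = x ⟨k.val, by omega⟩ := congrArg x (Fin.ext rfl)
      have c2 : x k.succ = x ⟨k.val+1, by omega⟩ := congrArg x (Fin.ext rfl)
      have c3 : yOf M T k = yOf M T ⟨k.val, by omega⟩ := congrArg _ (Fin.ext rfl)
      rw [Set.mem_Icc, c1, c2, c3]
      exact ⟨hl, hr⟩
    · intro j k hj hk
      have hj' : j < M := by omega
      obtain ⟨hl, hr⟩ := h j k (by omega) hk
      rw [entA M x T j k (by omega) hk, entA M x T (j+1) k (by omega) (by omega),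
          entA M x T (j+1) (k+1) (by omega) (by omega)]
      exact ⟨hl, hr⟩
  · rintro ⟨hbox, hgt⟩ j k hj hk
    rcases Nat.lt_or_ge j M with hlt | hge
    · have hres := hgt j k (by omega) hk
      rw [entA M x T j k (by omega) hk, entA M x T (j+1) k (by omega) (by omega),
          entA M x T (j+1) (k+1) (by omega) (by omega)] at hres
      exact hres
    · have hjM : j = M := by omega
      rw [hjM] at hk ⊢
      have hkk : k < M + 1 := by omega
      have hb := hbox ⟨k, hkk⟩ (Set.mem_univ _)
      rw [Set.mem_Icc] at hb
      rw [entRowTop M x T k (by omega), entRowTop M x T (k+1) (by omega),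
          entRowM M x T k (by omega)]
      have c1 : x (⟨k, hkk⟩ : Fin (M+1)).castSucc = x ⟨k, by omega⟩ := congrArg x (Fin.ext rfl)
      have c2 : x (⟨k, hkk⟩ : Fin (M+1)).succ = x ⟨k+1, by omega⟩ := congrArg x (Fin.ext rfl)
      have c3 : yOf M T ⟨k, hkk⟩ = yOf M T ⟨k, by omega⟩ := congrArg _ (Fin.ext rfl)
      rw [c1, c2, c3] at hb
      exact hb
lemma monotone_of_mem_gtBox {m : ℕ} {x : Fin (m+2) → ℝ} {y : Fin (m+1) → ℝ}
    (hy : y ∈ gtBox (m+1) x) : Monotone y := by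
  rw [Fin.monotone_iff_le_succ]
  intro i
  have a1 : y i.castSucc ≤ x i.castSucc.succ := (hy i.castSucc (Set.mem_univ _)).2
  have a2 : x i.succ.castSucc ≤ y i.succ := (hy i.succ (Set.mem_univ _)).1
  have a4 : x i.castSucc.succ = x i.succ.castSucc := congrArg x (Fin.ext (by simp))
  calc y i.castSucc ≤ x i.castSucc.succ := a1
    _ = x i.succ.castSucc := a4
    _ ≤ y i.succ := a2

lemma GT_vol (M : ℕ) : ∀ x : Fin (M+1) → ℝ, StrictMono x →
    volume (GTset (M+1) x)
      = ENNReal.ofReal (hVdm (M+1) x / ∏ j ∈ Finset.range (M+1), (j ! : ℝ)) := by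
  induction M with
  | zero =>
    intro x _
    haveI : IsEmpty (TriIdx 1) := ⟨fun q => by have := q.2.1; omega⟩
    have h1 : GTset 1 x = Set.univ := by
      apply Set.eq_univ_iff_forall.mpr
      intro T j k hj hk
      exact absurd hj (by omega)
    have h2 : (Set.univ : Set (TriIdx 1 → ℝ)) = Set.univ.pi (fun _ => Set.univ) := by
      rw [Set.pi_univ]
    have h3 : hVdm 1 x = 1 := by
      unfold hVdm
      rw [Fin.prod_univ_one]
      simp
    rw [h1, h2, volume_pi_pi, h3]
    simp
  | succ M ih =>
    intro x hx
    classical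
    set cM : ℝ := ∏ j ∈ Finset.range (M+1), (j ! : ℝ) with hcM
    have hcMpos : 0 < cM := by
      rw [hcM]; apply Finset.prod_pos; intro i _; exact_mod_cast Nat.factorial_pos i
    set A : Set ((Fin (M+1) → ℝ) × (TriIdx (M+1) → ℝ)) :=
      {z | z.1 ∈ gtBox (M+1) x} ∩ {z | z.2 ∈ GTset (M+1) z.1} with hA
    have hAmeas : MeasurableSet A :=
      ((measurableSet_gtBox (M+1) x).preimage measurable_fst).inter (measurableSet_GT_pair (M+1))
    -- measure preserving decomposition
    have hsplit := MeasureTheory.volume_preserving_piEquivPiSubtypeProd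
      (fun _ : TriIdx (M+2) => ℝ) (fun q : TriIdx (M+2) => q.1.1.val = M)
    have hp1 := MeasureTheory.volume_measurePreserving_piCongrLeft
      (fun _ : Fin (M+1) => ℝ) (eLast M)
    have hp2 := MeasureTheory.volume_measurePreserving_piCongrLeft
      (fun _ : TriIdx (M+1) => ℝ) (eIn M)
    have hprod := hp1.prod hp2
    rw [← MeasureTheory.Measure.volume_eq_prod, ← MeasureTheory.Measure.volume_eq_prod] at hprod
    have hΦ := hprod.comp hsplit
    -- value computations
    have hval1 : ∀ T : TriIdx (M+2) → ℝ,
        (MeasurableEquiv.piCongrLeft (fun _ : Fin (M+1) => ℝ) (eLast M))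
          (fun q : {q : TriIdx (M+2) // q.1.1.val = M} => T q.1) = yOf M T := by
      intro T
      funext k
      show (Equiv.piCongrLeft (fun _ : Fin (M+1) => ℝ) (eLast M))
          (fun q : {q : TriIdx (M+2) // q.1.1.val = M} => T q.1) k = _
      conv_lhs => rw [← (eLast M).apply_symm_apply k]
      rw [Equiv.piCongrLeft_apply_apply]
      rfl
    have hval2 : ∀ T : TriIdx (M+2) → ℝ,
        (MeasurableEquiv.piCongrLeft (fun _ : TriIdx (M+1) => ℝ) (eIn M))
          (fun q : {q : TriIdx (M+2) // ¬ q.1.1.val = M} => T q.1) = TinOf M T := by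
      intro T
      funext k
      show (Equiv.piCongrLeft (fun _ : TriIdx (M+1) => ℝ) (eIn M))
          (fun q : {q : TriIdx (M+2) // ¬ q.1.1.val = M} => T q.1) k = _
      conv_lhs => rw [← (eIn M).apply_symm_apply k]
      rw [Equiv.piCongrLeft_apply_apply]
      rfl
    have hpre : (Prod.map (⇑(MeasurableEquiv.piCongrLeft (fun _ : Fin (M+1) => ℝ) (eLast M)))
          (⇑(MeasurableEquiv.piCongrLeft (fun _ : TriIdx (M+1) => ℝ) (eIn M)))
        ∘ ⇑(MeasurableEquiv.piEquivPiSubtypeProd (fun _ : TriIdx (M+2) => ℝ)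
            (fun q : TriIdx (M+2) => q.1.1.val = M))) ⁻¹' A = GTset (M+2) x := by
      ext T
      rw [Set.mem_preimage, Function.comp_apply]
      have hs : (MeasurableEquiv.piEquivPiSubtypeProd (fun _ : TriIdx (M+2) => ℝ)
          (fun q : TriIdx (M+2) => q.1.1.val = M)) T
          = (fun q : {q : TriIdx (M+2) // q.1.1.val = M} => T q.1,
             fun q : {q : TriIdx (M+2) // ¬ q.1.1.val = M} => T q.1) := rfl
      rw [hs, Prod.map_apply, hval1 T, hval2 T]
      constructor
      · rintro ⟨hb, hg⟩
        exact (step_mem M x T).mpr ⟨hb, hg⟩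
      · intro h
        exact (step_mem M x T).mp h
    -- null set and a.e. identification
    have hnull2 : volume (⋃ k : Fin (M+1), {y : Fin (M+1) → ℝ | y k = x k.succ}) = 0 :=
      MeasureTheory.measure_iUnion_null fun k => null_eval _ k _
    have hae0 : ∀ᵐ y ∂(volume : Measure (Fin (M+1) → ℝ)),
        y ∉ ⋃ k : Fin (M+1), {y : Fin (M+1) → ℝ | y k = x k.succ} := by
      rw [MeasureTheory.ae_iff]
      refine MeasureTheory.measure_mono_null (fun a ha => ?_) hnull2
      simpa using ha
    have hae : (fun y => volume (GTset (M+1) y))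
        =ᵐ[volume.restrict (gtBox (M+1) x)]
        (fun y => ENNReal.ofReal (hVdm (M+1) y / cM)) := by
      filter_upwards [MeasureTheory.ae_restrict_mem (measurableSet_gtBox (M+1) x),
        MeasureTheory.ae_restrict_of_ae hae0] with y hy hyn
      have hsm : StrictMono y := by
        rw [Fin.strictMono_iff_lt_succ]
        intro i
        have a1 : y i.castSucc ≤ x i.castSucc.succ := (hy i.castSucc (Set.mem_univ _)).2
        have a2 : x i.succ.castSucc ≤ y i.succ := (hy i.succ (Set.mem_univ _)).1
        have a3 : y i.castSucc ≠ x i.castSucc.succ := fun h =>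
          hyn (Set.mem_iUnion.mpr ⟨i.castSucc, h⟩)
        have a4 : x i.castSucc.succ = x i.succ.castSucc := congrArg x (Fin.ext (by simp))
        calc y i.castSucc < x i.castSucc.succ := lt_of_le_of_ne a1 a3
          _ = x i.succ.castSucc := a4
          _ ≤ y i.succ := a2
      rw [ih y hsm]
    have hInt : MeasureTheory.IntegrableOn (fun y => hVdm (M+1) y / cM)
        (gtBox (M+1) x) volume :=
      ContinuousOn.integrableOn_compact (isCompact_gtBox _ _)
        ((continuous_hVdm (M+1)).div_const cM).continuousOn
    have hnn : 0 ≤ᵐ[volume.restrict (gtBox (M+1) x)] (fun y => hVdm (M+1) y / cM) := by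
      filter_upwards [MeasureTheory.ae_restrict_mem (measurableSet_gtBox (M+1) x)] with y hy
      have := hVdm_nonneg (monotone_of_mem_gtBox hy)
      positivity
    calc volume (GTset (M+2) x)
        = volume A := by rw [← hpre]; exact hΦ.measure_preimage hAmeas.nullMeasurableSet
      _ = ∫⁻ y, volume (Prod.mk y ⁻¹' A) := by
          rw [MeasureTheory.Measure.volume_eq_prod, MeasureTheory.Measure.prod_apply hAmeas]
      _ = ∫⁻ y, Set.indicator (gtBox (M+1) x)
            (fun y => volume (GTset (M+1) y)) y := by
          congr 1
          funext y
          by_cases hy : y ∈ gtBox (M+1) x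
          · rw [Set.indicator_of_mem hy]
            congr 1
            ext T
            simp [hA, hy]
          · rw [Set.indicator_of_notMem hy,
              show Prod.mk y ⁻¹' A = ∅ from by ext T; simp [hA, hy]]
            exact MeasureTheory.measure_empty
      _ = ∫⁻ y in gtBox (M+1) x, volume (GTset (M+1) y) := by
          rw [MeasureTheory.lintegral_indicator (measurableSet_gtBox (M+1) x)]
      _ = ∫⁻ y in gtBox (M+1) x, ENNReal.ofReal (hVdm (M+1) y / cM) :=
          MeasureTheory.lintegral_congr_ae hae
      _ = ENNReal.ofReal (∫ y in gtBox (M+1) x, hVdm (M+1) y / cM) :=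
          (MeasureTheory.ofReal_integral_eq_lintegral_ofReal hInt hnn).symm
      _ = ENNReal.ofReal (hVdm (M+2) x / ∏ j ∈ Finset.range (M+2), (j ! : ℝ)) := by
          rw [MeasureTheory.integral_div, key_integral (M+1) x hx.monotone]
          congr 1
          rw [Finset.prod_range_succ, ← hcM]
          rw [div_div]
          ring_nf

/-- The volume of the Gelfand–Tsetlin polytope with bottom row `x ∈ W_N` equals
`h_N(x) / ∏_{j=1}^{N-1} j!`. -/
theorem gelfand_tsetlin_polytope_volume (N : ℕ) (hN : 2 ≤ N) (x : Fin N → ℝ)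
    (hx : StrictMono x) :
    volume {T : TriIdx N → ℝ | ∀ j k : ℕ, j < N - 1 → k ≤ j →
        ent N T x (j + 1) k ≤ ent N T x j k ∧ ent N T x j k ≤ ent N T x (j + 1) (k + 1)}
      = ENNReal.ofReal (hVdm N x / ∏ j ∈ Finset.range N, (j.factorial : ℝ)) := by
  obtain ⟨M, rfl⟩ : ∃ M, N = M + 1 := ⟨N - 1, by omega⟩
  exact GT_vol M x hx
end

section
/- For each fixed y ∈ ℝ, the function u(t,x) := (K_0(e^{−y/ξ})/K_0(e^{−x/ξ}))·Q_ξ(t,y|x) satisfies, for all t > 0 and x ∈ ℝ, the diffusion equation ∂u/∂t = (1/2)·∂²u/∂x² + (d/dx log K_0(e^{−x/ξ}))·∂u/∂x; i.e., the conditioned killing Brownian motion has the Matsumoto–Yor infinitesimal generator (1/2)d²/dx² + (d/dx log K_0(e^{−x/ξ}))·d/dx. -/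
open MeasureTheory Filter Topology

/-- Macdonald function of imaginary order: `K_{ik}(z) = ∫_0^∞ e^{-z cosh u} cos(ku) du`. -/
noncomputable def Kik (k z : ℝ) : ℝ :=
  ∫ u in Set.Ioi (0:ℝ), Real.exp (-(z * Real.cosh u)) * Real.cos (k * u)

/-- Transition probability density `Q_ξ(t,y|x)` of the ξ-killing Brownian motion. -/
noncomputable def Qxi (ξ t y x : ℝ) : ℝ :=
  (1 / Real.pi ^ 2) *
    ∫ k : ℝ, Real.exp (-(k ^ 2 * t) / 2) * Kik (ξ * k) (Real.exp (-(x / ξ)))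
      * Kik (ξ * k) (Real.exp (-(y / ξ))) * (ξ * k * Real.sinh (Real.pi * ξ * k))

/-- Survival probability `N_ξ(T,x) = ∫_ℝ Q_ξ(T,y|x) dy`. -/
noncomputable def Nxi (ξ T x : ℝ) : ℝ := ∫ y : ℝ, Qxi ξ T y x

open Set Real



lemma cosh_ge_lin (u : ℝ) : (1 + u) / 2 ≤ Real.cosh u := by
  have h1 : u + 1 ≤ Real.exp u := Real.add_one_le_exp u
  have h2 : 0 < Real.exp (-u) := Real.exp_pos _
  rw [Real.cosh_eq]; linarith

lemma pow_mul_exp_le (c : ℝ) (hc : 0 < c) (n : ℕ) {s : ℝ} (hs : 0 ≤ s) :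
    s ^ n * Real.exp (-(c * s)) ≤ n.factorial / c ^ n := by
  have hfac : (0:ℝ) < n.factorial := by exact_mod_cast n.factorial_pos
  have hcn : (0:ℝ) < c ^ n := by positivity
  have key : c ^ n * s ^ n ≤ n.factorial * Real.exp (c * s) := by
    have h := Real.pow_div_factorial_le_exp (x := c * s) (by positivity) n
    rw [div_le_iff₀ hfac, mul_pow] at h
    nlinarith [h]
  have he : 0 < Real.exp (c * s) := Real.exp_pos _
  rw [Real.exp_neg, ← div_eq_mul_inv, div_le_div_iff₀ he hcn]
  nlinarith [key]

/-- Master integrability: `cosh^n e^{-z cosh}` integrable on `(0,∞)` for `z>0`. -/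
lemma integrableOn_coshpow_exp {z : ℝ} (hz : 0 < z) (n : ℕ) :
    IntegrableOn (fun u => Real.cosh u ^ n * Real.exp (-(z * Real.cosh u))) (Ioi (0:ℝ)) := by
  have hc : Continuous (fun u => Real.cosh u ^ n * Real.exp (-(z * Real.cosh u))) := by
    continuity
  have hg : IntegrableOn
      (fun u => (n.factorial / (z/2) ^ n * Real.exp (-(z/4))) * Real.exp (-(z/4) * u))
      (Ioi (0:ℝ)) := (exp_neg_integrableOn_Ioi 0 (by positivity : (0:ℝ) < z/4)).const_mul _
  refine Integrable.mono' hg hc.aestronglyMeasurable ?_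
  filter_upwards [ae_restrict_mem measurableSet_Ioi] with u hu
  have hch : (0:ℝ) ≤ Real.cosh u := (Real.cosh_pos u).le
  have h1 : Real.cosh u ^ n * Real.exp (-(z/2 * Real.cosh u)) ≤ n.factorial / (z/2) ^ n :=
    pow_mul_exp_le (z/2) (by positivity) n hch
  have h2 : Real.exp (-(z * Real.cosh u))
      = Real.exp (-(z/2 * Real.cosh u)) * Real.exp (-(z/2 * Real.cosh u)) := by
    rw [← Real.exp_add]; ring_nf
  have h3 : Real.exp (-(z/2 * Real.cosh u)) ≤ Real.exp (-(z/4)) * Real.exp (-(z/4) * u) := by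
    rw [← Real.exp_add]
    apply Real.exp_le_exp.2
    have := cosh_ge_lin u
    nlinarith
  rw [Real.norm_eq_abs, abs_of_nonneg (by positivity)]
  calc Real.cosh u ^ n * Real.exp (-(z * Real.cosh u))
      = (Real.cosh u ^ n * Real.exp (-(z/2 * Real.cosh u))) * Real.exp (-(z/2 * Real.cosh u)) := by
        rw [h2]; ring
    _ ≤ (n.factorial / (z/2) ^ n) * (Real.exp (-(z/4)) * Real.exp (-(z/4) * u)) := by
        apply mul_le_mul h1 h3 (Real.exp_pos _).le (by positivity)
    _ = (n.factorial / (z/2) ^ n * Real.exp (-(z/4))) * Real.exp (-(z/4) * u) := by ring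


noncomputable def Jn (n : ℕ) (k z : ℝ) : ℝ :=
  ∫ u in Ioi (0:ℝ), Real.cosh u ^ n * (Real.exp (-(z * Real.cosh u)) * Real.cos (k * u))

noncomputable def intK (n : ℕ) (z : ℝ) : ℝ :=
  ∫ u in Ioi (0:ℝ), Real.cosh u ^ n * Real.exp (-(z * Real.cosh u))

lemma JnInt_bound (n : ℕ) (k : ℝ) {z zm : ℝ} (hz : zm ≤ z) (u : ℝ) :
    ‖Real.cosh u ^ n * (Real.exp (-(z * Real.cosh u)) * Real.cos (k * u))‖
      ≤ Real.cosh u ^ n * Real.exp (-(zm * Real.cosh u)) := by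
  have hch : (0:ℝ) ≤ Real.cosh u := (Real.cosh_pos u).le
  have hcc := abs_cos_le_one (k * u)
  have hee : Real.exp (-(z * Real.cosh u)) ≤ Real.exp (-(zm * Real.cosh u)) := by
    apply Real.exp_le_exp.2; nlinarith
  rw [Real.norm_eq_abs, abs_mul, abs_mul, abs_of_nonneg (by positivity : (0:ℝ) ≤ Real.cosh u ^ n),
    abs_of_nonneg (Real.exp_pos _).le]
  have key : Real.exp (-(z * Real.cosh u)) * |Real.cos (k * u)| ≤ Real.exp (-(zm * Real.cosh u)) := by
    nlinarith [Real.exp_pos (-(z * Real.cosh u)), abs_nonneg (Real.cos (k*u))]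
  exact mul_le_mul_of_nonneg_left key (by positivity)

lemma continuous_JnInt (n : ℕ) (k z : ℝ) :
    Continuous (fun u => Real.cosh u ^ n * (Real.exp (-(z * Real.cosh u)) * Real.cos (k * u))) := by
  fun_prop

lemma integrableOn_JnInt (n : ℕ) (k : ℝ) {z : ℝ} (hz : 0 < z) :
    IntegrableOn (fun u => Real.cosh u ^ n * (Real.exp (-(z * Real.cosh u)) * Real.cos (k * u)))
      (Ioi (0:ℝ)) := by
  refine Integrable.mono' (integrableOn_coshpow_exp hz n)
    ((continuous_JnInt n k z).aestronglyMeasurable) ?_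
  filter_upwards with u
  exact JnInt_bound n k le_rfl u

lemma abs_Jn_le (n : ℕ) (k : ℝ) {z zm : ℝ} (hzm : 0 < zm) (hz : zm ≤ z) :
    |Jn n k z| ≤ intK n zm := by
  rw [← Real.norm_eq_abs]
  exact norm_integral_le_of_norm_le (integrableOn_coshpow_exp hzm n)
    (Eventually.of_forall (JnInt_bound n k hz))

lemma intK_nonneg (n : ℕ) (z : ℝ) : 0 ≤ intK n z := by
  apply integral_nonneg; intro u; positivity

lemma hasDerivAt_JnInt (n : ℕ) (k : ℝ) (u : ℝ) (w : ℝ) :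
    HasDerivAt (fun w => Real.cosh u ^ n * (Real.exp (-(w * Real.cosh u)) * Real.cos (k * u)))
      (-(Real.cosh u ^ (n+1) * (Real.exp (-(w * Real.cosh u)) * Real.cos (k * u)))) w := by
  have h0 : HasDerivAt (fun w : ℝ => -(w * Real.cosh u)) (-Real.cosh u) w := by
    simpa using ((hasDerivAt_id w).mul_const (Real.cosh u)).fun_neg
  have h1 := h0.exp
  have h2 := (h1.const_mul ((Real.cosh u : ℝ) ^ n)).mul_const (Real.cos (k * u))
  exact (h2.congr_deriv (by ring)).congr_of_eventuallyEq (Eventually.of_forall fun w' => by ring)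

lemma hasDerivAt_Jn (n : ℕ) (k : ℝ) {z : ℝ} (hz : 0 < z) :
    HasDerivAt (fun w => Jn n k w) (-(Jn (n+1) k z)) z := by
  have hb : ∀ᵐ u ∂(volume.restrict (Ioi (0:ℝ))), ∀ w ∈ Metric.ball z (z/2),
      ‖-(Real.cosh u ^ (n+1) * (Real.exp (-(w * Real.cosh u)) * Real.cos (k * u)))‖
        ≤ Real.cosh u ^ (n+1) * Real.exp (-(z/2 * Real.cosh u)) := by
    filter_upwards with u w hw
    have hwz : z/2 ≤ w := by
      have := abs_lt.1 (mem_ball_iff_norm.1 hw); linarith [this.1]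
    rw [norm_neg]
    exact JnInt_bound (n+1) k hwz u
  have hd : ∀ᵐ u ∂(volume.restrict (Ioi (0:ℝ))), ∀ w ∈ Metric.ball z (z/2),
      HasDerivAt (fun w => Real.cosh u ^ n * (Real.exp (-(w * Real.cosh u)) * Real.cos (k * u)))
        (-(Real.cosh u ^ (n+1) * (Real.exp (-(w * Real.cosh u)) * Real.cos (k * u)))) w := by
    filter_upwards with u w _
    exact hasDerivAt_JnInt n k u w
  have key := hasDerivAt_integral_of_dominated_loc_of_deriv_le
    (F := fun w u => Real.cosh u ^ n * (Real.exp (-(w * Real.cosh u)) * Real.cos (k * u)))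
    (F' := fun w u => -(Real.cosh u ^ (n+1) * (Real.exp (-(w * Real.cosh u)) * Real.cos (k * u))))
    (x₀ := z) (s := Metric.ball z (z/2))
    (bound := fun u => Real.cosh u ^ (n+1) * Real.exp (-(z/2 * Real.cosh u)))
    (μ := volume.restrict (Ioi (0:ℝ))) (Metric.ball_mem_nhds _ (by positivity))
    (Eventually.of_forall fun w => ((continuous_JnInt n k w).aestronglyMeasurable))
    (integrableOn_JnInt n k hz)
    (((continuous_JnInt (n+1) k z).neg).aestronglyMeasurable)
    hb (integrableOn_coshpow_exp (by positivity) (n+1)) hd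
  have heq : (∫ u in Ioi (0:ℝ),
      -(Real.cosh u ^ (n+1) * (Real.exp (-(z * Real.cosh u)) * Real.cos (k * u))))
      = -(Jn (n+1) k z) := by
    rw [integral_neg]; rfl
  rw [heq] at key
  exact key.2

lemma stronglyMeasurable_Jn (n : ℕ) (z : ℝ) : StronglyMeasurable (fun k => Jn n k z) := by
  have hc : Continuous (fun p : ℝ × ℝ =>
      Real.cosh p.2 ^ n * (Real.exp (-(z * Real.cosh p.2)) * Real.cos (p.1 * p.2))) := by
    continuity
  exact hc.stronglyMeasurable.integral_prod_right'





lemma tendsto_cosh_atTop' : Tendsto Real.cosh atTop atTop := by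
  apply tendsto_atTop_mono cosh_ge_lin
  apply Tendsto.atTop_div_const (by norm_num)
  exact tendsto_atTop_add_const_left _ _ tendsto_id

lemma hasDerivAt_gODE (k z : ℝ) (u : ℝ) :
    HasDerivAt (fun u => -(z * Real.sinh u) * (Real.exp (-(z * Real.cosh u)) * Real.cos (k * u))
        + k * (Real.exp (-(z * Real.cosh u)) * Real.sin (k * u)))
      ((z^2 * Real.sinh u ^ 2 - z * Real.cosh u + k^2)
        * (Real.exp (-(z * Real.cosh u)) * Real.cos (k * u))) u := by
  have hku : HasDerivAt (fun u : ℝ => k * u) k u := by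
    simpa using (hasDerivAt_id u).const_mul k
  have hcos : HasDerivAt (fun u : ℝ => Real.cos (k * u)) (-Real.sin (k * u) * k) u := hku.cos
  have hsin : HasDerivAt (fun u : ℝ => Real.sin (k * u)) (Real.cos (k * u) * k) u := hku.sin
  have hf : HasDerivAt (fun u : ℝ => Real.exp (-(z * Real.cosh u)))
      (Real.exp (-(z * Real.cosh u)) * -(z * Real.sinh u)) u :=
    (((Real.hasDerivAt_cosh u).const_mul z).neg).exp
  have hzs : HasDerivAt (fun u : ℝ => -(z * Real.sinh u)) (-(z * Real.cosh u)) u :=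
    ((Real.hasDerivAt_sinh u).const_mul z).neg
  have h := (hzs.fun_mul (hf.fun_mul hcos)).fun_add ((hf.fun_mul hsin).const_mul k)
  exact h.congr_deriv (by ring)

lemma abs_sinh_le_cosh (u : ℝ) : |Real.sinh u| ≤ Real.cosh u := by
  rw [Real.abs_sinh, ← Real.cosh_abs]
  have h : Real.cosh |u| - Real.sinh |u| = Real.exp (-|u|) := by
    rw [Real.cosh_eq, Real.sinh_eq]; ring
  linarith [Real.exp_pos (-|u|)]

lemma integral_GODE (k : ℝ) {z : ℝ} (hz : 0 < z) :
    ∫ u in Ioi (0:ℝ), (z^2 * Real.sinh u ^ 2 - z * Real.cosh u + k^2)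
        * (Real.exp (-(z * Real.cosh u)) * Real.cos (k * u)) = 0 := by
  set g : ℝ → ℝ := fun u => -(z * Real.sinh u) * (Real.exp (-(z * Real.cosh u)) * Real.cos (k * u))
        + k * (Real.exp (-(z * Real.cosh u)) * Real.sin (k * u)) with hg
  have hderiv : ∀ u ∈ Ici (0:ℝ), HasDerivAt g
      ((z^2 * Real.sinh u ^ 2 - z * Real.cosh u + k^2)
        * (Real.exp (-(z * Real.cosh u)) * Real.cos (k * u))) u :=
    fun u _ => hasDerivAt_gODE k z u
  have hint : IntegrableOn (fun u => (z^2 * Real.sinh u ^ 2 - z * Real.cosh u + k^2)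
      * (Real.exp (-(z * Real.cosh u)) * Real.cos (k * u))) (Ioi (0:ℝ)) := by
    refine Integrable.mono' (((integrableOn_coshpow_exp hz 2).const_mul (z^2 + z + k^2)))
      (Continuous.aestronglyMeasurable (by fun_prop)) ?_
    filter_upwards with u
    have h1 : (1:ℝ) ≤ Real.cosh u := Real.one_le_cosh u
    have hsc : Real.sinh u ^ 2 ≤ Real.cosh u ^ 2 := by
      have := Real.cosh_sq_sub_sinh_sq u; nlinarith
    have hc2 : Real.cosh u ≤ Real.cosh u ^ 2 := by nlinarith
    have hcc := abs_cos_le_one (k * u)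
    have he : (0:ℝ) < Real.exp (-(z * Real.cosh u)) := Real.exp_pos _
    rw [Real.norm_eq_abs, abs_mul, abs_mul, abs_of_nonneg he.le]
    have hA : z^2 * Real.sinh u ^ 2 ≤ z^2 * Real.cosh u ^ 2 :=
      mul_le_mul_of_nonneg_left hsc (sq_nonneg z)
    have hB : z * Real.cosh u ≤ z * Real.cosh u ^ 2 := mul_le_mul_of_nonneg_left hc2 hz.le
    have hC : k^2 ≤ k^2 * Real.cosh u ^ 2 := by nlinarith [sq_nonneg k]
    have habs : |z^2 * Real.sinh u ^ 2 - z * Real.cosh u + k^2|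
        ≤ (z^2 + z + k^2) * Real.cosh u ^ 2 := by
      rw [abs_le]
      constructor
      · nlinarith [sq_nonneg (z * Real.sinh u), sq_nonneg (k * Real.cosh u), sq_nonneg k,
          mul_nonneg (sq_nonneg z) (sq_nonneg (Real.cosh u))]
      · nlinarith [mul_nonneg hz.le (Real.cosh_pos u).le, sq_nonneg k]
    have hE : Real.exp (-(z * Real.cosh u)) * |Real.cos (k * u)| ≤ Real.exp (-(z * Real.cosh u)) :=
      mul_le_of_le_one_right he.le hcc
    calc |z^2 * Real.sinh u ^ 2 - z * Real.cosh u + k^2|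
          * (Real.exp (-(z * Real.cosh u)) * |Real.cos (k*u)|)
        ≤ ((z^2 + z + k^2) * Real.cosh u ^ 2) * Real.exp (-(z * Real.cosh u)) :=
          mul_le_mul habs hE (by positivity) (by positivity)
      _ = (z^2 + z + k^2) * (Real.cosh u ^ 2 * Real.exp (-(z * Real.cosh u))) := by ring
  have htend : Tendsto g atTop (𝓝 0) := by
    have hφ : Tendsto (fun s : ℝ => (z * s + |k|) * Real.exp (-s * z)) atTop (𝓝 0) := by
      have h1 : Tendsto (fun s : ℝ => s * z) atTop atTop := tendsto_id.atTop_mul_const hz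
      have h2 : Tendsto (fun t : ℝ => (t + |k|) * Real.exp (-t)) atTop (𝓝 0) := by
        have ha := (tendsto_pow_mul_exp_neg_atTop_nhds_zero 1).add
          (tendsto_exp_neg_atTop_nhds_zero.const_mul |k|)
        rw [show (0:ℝ) + |k| * 0 = 0 by ring] at ha
        exact ha.congr fun t => by ring
      have h3 := h2.comp h1
      refine h3.congr fun s => ?_
      simp only [Function.comp_apply]
      ring
    have h4 := hφ.comp tendsto_cosh_atTop'
    apply squeeze_zero_norm _ h4
    intro u
    have he : (0:ℝ) < Real.exp (-(z * Real.cosh u)) := Real.exp_pos _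
    have hcc := abs_cos_le_one (k * u)
    have hss := abs_sin_le_one (k * u)
    have hsc := abs_sinh_le_cosh u
    have t1 : |(-(z * Real.sinh u)) * (Real.exp (-(z * Real.cosh u)) * Real.cos (k * u))|
        ≤ z * Real.cosh u * Real.exp (-(z * Real.cosh u)) := by
      rw [abs_mul, abs_neg, abs_mul, abs_mul, abs_of_nonneg he.le, abs_of_nonneg hz.le]
      exact mul_le_mul (mul_le_mul_of_nonneg_left hsc hz.le)
        (mul_le_of_le_one_right he.le hcc) (by positivity) (by positivity)
    have t2 : |k * (Real.exp (-(z * Real.cosh u)) * Real.sin (k * u))|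
        ≤ |k| * Real.exp (-(z * Real.cosh u)) := by
      rw [abs_mul, abs_mul, abs_of_nonneg he.le]
      exact mul_le_mul_of_nonneg_left (mul_le_of_le_one_right he.le hss) (abs_nonneg k)
    have habs := (abs_add_le (-(z * Real.sinh u) * (Real.exp (-(z * Real.cosh u)) * Real.cos (k * u)))
      (k * (Real.exp (-(z * Real.cosh u)) * Real.sin (k * u))))
    simp only [Function.comp_apply, Real.norm_eq_abs, hg]
    calc |(-(z * Real.sinh u)) * (Real.exp (-(z * Real.cosh u)) * Real.cos (k * u))
          + k * (Real.exp (-(z * Real.cosh u)) * Real.sin (k * u))|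
        ≤ z * Real.cosh u * Real.exp (-(z * Real.cosh u))
          + |k| * Real.exp (-(z * Real.cosh u)) := le_trans habs (add_le_add t1 t2)
      _ = (z * Real.cosh u + |k|) * Real.exp (-(Real.cosh u) * z) := by ring_nf
  have hmain := integral_Ioi_of_hasDerivAt_of_tendsto' hderiv hint htend
  have hg0 : g 0 = 0 := by simp [hg]
  rw [hmain, hg0, sub_zero]

lemma Jn_ODE (k : ℝ) {z : ℝ} (hz : 0 < z) :
    z^2 * Jn 2 k z - z * Jn 1 k z = (z^2 - k^2) * Jn 0 k z := by
  have h0 := integral_GODE k hz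
  have hexp : (fun u => (z^2 * Real.sinh u ^ 2 - z * Real.cosh u + k^2)
        * (Real.exp (-(z * Real.cosh u)) * Real.cos (k * u)))
      = fun u => z^2 * (Real.cosh u ^ 2 * (Real.exp (-(z * Real.cosh u)) * Real.cos (k * u)))
        - (z * (Real.cosh u ^ 1 * (Real.exp (-(z * Real.cosh u)) * Real.cos (k * u)))
          + (z^2 - k^2) * (Real.cosh u ^ 0 * (Real.exp (-(z * Real.cosh u)) * Real.cos (k * u)))) := by
    funext u
    have hs := Real.sinh_sq u
    rw [hs]; ring
  rw [hexp] at h0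
  have hI2 : IntegrableOn (fun u => z^2 * (Real.cosh u ^ 2
      * (Real.exp (-(z * Real.cosh u)) * Real.cos (k * u)))) (Ioi (0:ℝ)) := by
    exact (integrableOn_JnInt 2 k hz).const_mul _
  have hI1 : IntegrableOn (fun u => z * (Real.cosh u ^ 1
      * (Real.exp (-(z * Real.cosh u)) * Real.cos (k * u)))) (Ioi (0:ℝ)) := by
    exact (integrableOn_JnInt 1 k hz).const_mul _
  have hI0 : IntegrableOn (fun u => (z^2 - k^2) * (Real.cosh u ^ 0
      * (Real.exp (-(z * Real.cosh u)) * Real.cos (k * u)))) (Ioi (0:ℝ)) := by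
    exact (integrableOn_JnInt 0 k hz).const_mul _
  have hIsum : IntegrableOn (fun u => z * (Real.cosh u ^ 1
      * (Real.exp (-(z * Real.cosh u)) * Real.cos (k * u)))
      + (z^2 - k^2) * (Real.cosh u ^ 0
      * (Real.exp (-(z * Real.cosh u)) * Real.cos (k * u)))) (Ioi (0:ℝ)) := by
    exact hI1.add hI0
  rw [integral_sub hI2 hIsum, integral_add hI1 hI0,
    integral_const_mul, integral_const_mul, integral_const_mul] at h0
  have e2 : (∫ u in Ioi (0:ℝ), Real.cosh u ^ 2 * (Real.exp (-(z * Real.cosh u)) * Real.cos (k * u)))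
      = Jn 2 k z := rfl
  have e1 : (∫ u in Ioi (0:ℝ), Real.cosh u ^ 1 * (Real.exp (-(z * Real.cosh u)) * Real.cos (k * u)))
      = Jn 1 k z := rfl
  have e0 : (∫ u in Ioi (0:ℝ), Real.cosh u ^ 0 * (Real.exp (-(z * Real.cosh u)) * Real.cos (k * u)))
      = Jn 0 k z := rfl
  rw [e2, e1, e0] at h0
  linarith














lemma Kik_eq (k z : ℝ) : Kik k z = Jn 0 k z := by simp [Kik, Jn]
lemma K0_eq (z : ℝ) : K0 z = Jn 0 0 z := by simp [K0, Jn]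

/-! ### chain rule lemmas in x -/

lemma hasDerivAt_zf (ξ x : ℝ) :
    HasDerivAt (fun r => Real.exp (-(r/ξ))) (-(Real.exp (-(x/ξ))/ξ)) x := by
  have h0 : HasDerivAt (fun r : ℝ => -(r/ξ)) (-(1/ξ)) x := by
    simpa using ((hasDerivAt_id x).div_const ξ).fun_neg
  have := h0.exp
  convert this using 1
  ring

lemma hasDerivAt_Jn_zf (ξ : ℝ) (n : ℕ) (κ x : ℝ) :
    HasDerivAt (fun r => Jn n κ (Real.exp (-(r/ξ))))
      (Jn (n+1) κ (Real.exp (-(x/ξ))) * (Real.exp (-(x/ξ))/ξ)) x := by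
  have h := (hasDerivAt_Jn n κ (Real.exp_pos (-(x/ξ)))).comp x (hasDerivAt_zf ξ x)
  exact h.congr_deriv (by ring)

lemma hasDerivAt_phi1 (ξ : ℝ) (κ x : ℝ) :
    HasDerivAt (fun r => Jn 1 κ (Real.exp (-(r/ξ))) * (Real.exp (-(r/ξ)) / ξ))
      (Jn 2 κ (Real.exp (-(x/ξ))) * (Real.exp (-(x/ξ))/ξ)^2
        - Jn 1 κ (Real.exp (-(x/ξ))) * (Real.exp (-(x/ξ))/ξ^2)) x := by
  have h := (hasDerivAt_Jn_zf ξ 1 κ x).mul ((hasDerivAt_zf ξ x).div_const ξ)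
  exact h.congr_deriv (by ring)

lemma phi2_eq {ξ : ℝ} (hξ : ξ ≠ 0) (k x : ℝ) :
    Jn 2 (ξ*k) (Real.exp (-(x/ξ))) * (Real.exp (-(x/ξ))/ξ)^2
      - Jn 1 (ξ*k) (Real.exp (-(x/ξ))) * (Real.exp (-(x/ξ))/ξ^2)
    = ((Real.exp (-(x/ξ)))^2/ξ^2 - k^2) * Jn 0 (ξ*k) (Real.exp (-(x/ξ))) := by
  have h := Jn_ODE (ξ*k) (Real.exp_pos (-(x/ξ)))
  set z := Real.exp (-(x/ξ)) with hzdef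
  field_simp
  linear_combination h

/-! ### the k-integrals -/

noncomputable def KInt (ξ t y x : ℝ) : ℝ :=
  ∫ k : ℝ, Real.exp (-(k ^ 2 * t) / 2) * Jn 0 (ξ*k) (Real.exp (-(x/ξ)))
    * Jn 0 (ξ*k) (Real.exp (-(y/ξ))) * (ξ * k * Real.sinh (Real.pi * ξ * k))

noncomputable def KIntx (ξ t y x : ℝ) : ℝ :=
  ∫ k : ℝ, Real.exp (-(k ^ 2 * t) / 2)
    * (Jn 1 (ξ*k) (Real.exp (-(x/ξ))) * (Real.exp (-(x/ξ))/ξ))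
    * Jn 0 (ξ*k) (Real.exp (-(y/ξ))) * (ξ * k * Real.sinh (Real.pi * ξ * k))

noncomputable def KIntxx (ξ t y x : ℝ) : ℝ :=
  ∫ k : ℝ, Real.exp (-(k ^ 2 * t) / 2)
    * (Jn 2 (ξ*k) (Real.exp (-(x/ξ))) * (Real.exp (-(x/ξ))/ξ)^2
        - Jn 1 (ξ*k) (Real.exp (-(x/ξ))) * (Real.exp (-(x/ξ))/ξ^2))
    * Jn 0 (ξ*k) (Real.exp (-(y/ξ))) * (ξ * k * Real.sinh (Real.pi * ξ * k))

noncomputable def KIntt (ξ t y x : ℝ) : ℝ :=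
  ∫ k : ℝ, (-(k^2)/2 * Real.exp (-(k ^ 2 * t) / 2)) * Jn 0 (ξ*k) (Real.exp (-(x/ξ)))
    * Jn 0 (ξ*k) (Real.exp (-(y/ξ))) * (ξ * k * Real.sinh (Real.pi * ξ * k))

lemma Qxi_eq (ξ t y x : ℝ) : Qxi ξ t y x = (1 / Real.pi ^ 2) * KInt ξ t y x := by
  unfold Qxi KInt
  simp only [Kik_eq]

lemma abs_mul4_le {a b c d a' b' c' d' : ℝ} (ha : |a| ≤ a') (hb : |b| ≤ b')
    (hc : |c| ≤ c') (hd : |d| ≤ d') : |a*b*c*d| ≤ a'*b'*c'*d' := by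
  have ha0 : 0 ≤ a' := (abs_nonneg a).trans ha
  have hb0 : 0 ≤ b' := (abs_nonneg b).trans hb
  have hc0 : 0 ≤ c' := (abs_nonneg c).trans hc
  rw [abs_mul, abs_mul, abs_mul]
  exact mul_le_mul (mul_le_mul (mul_le_mul ha hb (abs_nonneg b) ha0) hc (abs_nonneg c)
    (mul_nonneg ha0 hb0)) hd (abs_nonneg d) (mul_nonneg (mul_nonneg ha0 hb0) hc0)

lemma weight_bound {ξ : ℝ} (hξ : 0 < ξ) (k : ℝ) :
    |ξ * k * Real.sinh (Real.pi * ξ * k)| ≤ ξ * (1+k^2) * Real.exp (Real.pi * ξ * |k|) := by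
  have hπ := Real.pi_pos
  have h1 : |Real.sinh (Real.pi * ξ * k)| ≤ Real.exp (Real.pi * ξ * |k|) := by
    refine (abs_sinh_le_cosh _).trans ?_
    rw [← Real.cosh_abs, abs_mul, abs_mul, abs_of_nonneg hπ.le, abs_of_nonneg hξ.le]
    rw [Real.cosh_eq]
    have := Real.exp_pos (-(Real.pi * ξ * |k|))
    have h2 : Real.exp (-(Real.pi * ξ * |k|)) ≤ Real.exp (Real.pi * ξ * |k|) := by
      apply Real.exp_le_exp.2
      have : (0:ℝ) ≤ Real.pi * ξ * |k| := by positivity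
      linarith
    linarith
  have h2 : |ξ * k| ≤ ξ * (1+k^2) := by
    rw [abs_mul, abs_of_nonneg hξ.le]
    have : |k| ≤ 1 + k^2 := by nlinarith [sq_nonneg (|k|-1), sq_abs k]
    exact mul_le_mul_of_nonneg_left this hξ.le
  calc |ξ * k * Real.sinh (Real.pi * ξ * k)| = |ξ * k| * |Real.sinh (Real.pi * ξ * k)| :=
        abs_mul _ _
    _ ≤ (ξ * (1+k^2)) * Real.exp (Real.pi * ξ * |k|) :=
        mul_le_mul h2 h1 (abs_nonneg _) (by positivity)
    _ = _ := by ring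

lemma integrable_master {c : ℝ} (hc : 0 < c) (b : ℝ) (hb : 0 ≤ b) (n : ℕ) :
    Integrable (fun k : ℝ => (1+k^2)^n * (Real.exp (b * |k|) * Real.exp (-(k^2*c)))) := by
  set C : ℝ := (n.factorial / (c/4)^n) * Real.exp (c/4 + b^2/c) with hC
  refine Integrable.mono' ((integrable_exp_neg_mul_sq (show (0:ℝ) < c/2 by positivity)).const_mul C)
    (Continuous.aestronglyMeasurable (by fun_prop)) ?_
  filter_upwards with k
  have h1 : (1+k^2)^n ≤ (n.factorial / (c/4)^n) * Real.exp (c/4*(1+k^2)) := by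
    have h := pow_mul_exp_le (c/4) (by positivity) n (s := 1+k^2) (by positivity)
    have heq : ((1+k^2)^n : ℝ)
        = (1+k^2)^n * Real.exp (-(c/4*(1+k^2))) * Real.exp (c/4*(1+k^2)) := by
      rw [mul_assoc, ← Real.exp_add]; simp
    rw [heq]
    exact mul_le_mul_of_nonneg_right h (Real.exp_pos _).le
  have h2 : Real.exp (b*|k|) ≤ Real.exp (b^2/c + c/4*k^2) := by
    apply Real.exp_le_exp.2
    have hk2 : k^2 = |k|^2 := (sq_abs k).symm
    have key : b^2/c + c/4*k^2 - b*|k| = (b - c/2*|k|)^2/c := by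
      field_simp; rw [hk2]; ring
    have hnn : 0 ≤ (b - c/2*|k|)^2/c := div_nonneg (sq_nonneg _) hc.le
    linarith
  rw [Real.norm_eq_abs, abs_of_nonneg (by positivity)]
  calc (1+k^2)^n * (Real.exp (b*|k|) * Real.exp (-(k^2*c)))
      ≤ ((n.factorial / (c/4)^n) * Real.exp (c/4*(1+k^2)))
        * (Real.exp (b^2/c + c/4*k^2) * Real.exp (-(k^2*c))) := by
        apply mul_le_mul h1 (mul_le_mul_of_nonneg_right h2 (Real.exp_pos _).le)
          (by positivity) (by positivity)
    _ = (n.factorial / (c/4)^n)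
        * Real.exp (c/4*(1+k^2) + ((b^2/c + c/4*k^2) + -(k^2*c))) := by
        rw [mul_assoc, ← Real.exp_add, ← Real.exp_add]
    _ = C * Real.exp (-(c/2) * k^2) := by
        rw [show c/4*(1+k^2) + ((b^2/c + c/4*k^2) + -(k^2*c)) = (c/4 + b^2/c) + -(c/2)*k^2 by ring,
          Real.exp_add, hC]
        ring

lemma sm_Jnk (j : ℕ) (ξ z : ℝ) : StronglyMeasurable (fun k : ℝ => Jn j (ξ*k) z) :=
  (stronglyMeasurable_Jn j z).comp_measurable (measurable_const.mul measurable_id)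

lemma exp_t_eq (t k : ℝ) : |Real.exp (-(k ^ 2 * t) / 2)| ≤ Real.exp (-(k^2*(t/2))) := by
  rw [abs_of_nonneg (Real.exp_pos _).le]
  exact le_of_eq (by congr 1; ring)

lemma integrable_KInt_base {ξ t : ℝ} (hξ : 0 < ξ) (ht : 0 < t) (y x : ℝ) :
    Integrable (fun k : ℝ => Real.exp (-(k ^ 2 * t) / 2) * Jn 0 (ξ*k) (Real.exp (-(x/ξ)))
      * Jn 0 (ξ*k) (Real.exp (-(y/ξ))) * (ξ * k * Real.sinh (Real.pi * ξ * k))) := by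
  have hπ := Real.pi_pos
  have hmeas : AEStronglyMeasurable (fun k : ℝ => Real.exp (-(k ^ 2 * t) / 2)
      * Jn 0 (ξ*k) (Real.exp (-(x/ξ))) * Jn 0 (ξ*k) (Real.exp (-(y/ξ)))
      * (ξ * k * Real.sinh (Real.pi * ξ * k))) volume := by
    refine StronglyMeasurable.aestronglyMeasurable ?_
    exact (((Continuous.stronglyMeasurable (by fun_prop)).mul
      (sm_Jnk 0 ξ _)).mul (sm_Jnk 0 ξ _)).mul (Continuous.stronglyMeasurable (by fun_prop))
  refine Integrable.mono' ((integrable_master (show (0:ℝ) < t/2 by positivity) (Real.pi*ξ)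
    (by positivity) 1).const_mul (intK 0 (Real.exp (-(x/ξ))) * intK 0 (Real.exp (-(y/ξ))) * ξ))
    hmeas ?_
  filter_upwards with k
  rw [Real.norm_eq_abs]
  calc |Real.exp (-(k ^ 2 * t) / 2) * Jn 0 (ξ*k) (Real.exp (-(x/ξ)))
        * Jn 0 (ξ*k) (Real.exp (-(y/ξ))) * (ξ * k * Real.sinh (Real.pi * ξ * k))|
      ≤ Real.exp (-(k^2*(t/2))) * intK 0 (Real.exp (-(x/ξ))) * intK 0 (Real.exp (-(y/ξ)))
        * (ξ * (1+k^2) * Real.exp (Real.pi * ξ * |k|)) :=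
        abs_mul4_le (exp_t_eq t k)
          (abs_Jn_le 0 (ξ*k) (Real.exp_pos _) le_rfl)
          (abs_Jn_le 0 (ξ*k) (Real.exp_pos _) le_rfl)
          (weight_bound hξ k)
    _ = (intK 0 (Real.exp (-(x/ξ))) * intK 0 (Real.exp (-(y/ξ))) * ξ)
        * ((1+k^2)^1 * (Real.exp (Real.pi*ξ*|k|) * Real.exp (-(k^2*(t/2))))) := by ring

lemma hasDerivAt_KInt_t {ξ t : ℝ} (hξ : 0 < ξ) (ht : 0 < t) (y x : ℝ) :
    HasDerivAt (fun s => KInt ξ s y x) (KIntt ξ t y x) t := by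
  have hπ := Real.pi_pos
  have hm' : AEStronglyMeasurable (fun k : ℝ => (-(k^2)/2 * Real.exp (-(k ^ 2 * t) / 2))
      * Jn 0 (ξ*k) (Real.exp (-(x/ξ))) * Jn 0 (ξ*k) (Real.exp (-(y/ξ)))
      * (ξ * k * Real.sinh (Real.pi * ξ * k))) volume := by
    refine StronglyMeasurable.aestronglyMeasurable ?_
    exact (((Continuous.stronglyMeasurable (by fun_prop)).mul
      (sm_Jnk 0 ξ _)).mul (sm_Jnk 0 ξ _)).mul (Continuous.stronglyMeasurable (by fun_prop))
  have hb : ∀ᵐ (k : ℝ), ∀ s ∈ Metric.ball t (t/2),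
      ‖(-(k^2)/2 * Real.exp (-(k ^ 2 * s) / 2)) * Jn 0 (ξ*k) (Real.exp (-(x/ξ)))
        * Jn 0 (ξ*k) (Real.exp (-(y/ξ))) * (ξ * k * Real.sinh (Real.pi * ξ * k))‖
      ≤ (intK 0 (Real.exp (-(x/ξ))) * intK 0 (Real.exp (-(y/ξ))) * (ξ/2))
        * ((1+k^2)^2 * (Real.exp (Real.pi*ξ*|k|) * Real.exp (-(k^2*(t/4))))) := by
    filter_upwards with k s hs
    have hst : t/2 ≤ s := by
      have := abs_lt.1 (by simpa [Real.dist_eq] using hs)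
      linarith [this.1]
    have hexp : |(-(k^2)/2 * Real.exp (-(k ^ 2 * s) / 2))|
        ≤ (1+k^2)/2 * Real.exp (-(k^2*(t/4))) := by
      rw [abs_mul, abs_of_nonneg (Real.exp_pos _).le, abs_div, abs_neg, abs_of_nonneg (sq_nonneg k),
        abs_two]
      have h1 : k^2/2 ≤ (1+k^2)/2 := by nlinarith
      have h2 : Real.exp (-(k ^ 2 * s) / 2) ≤ Real.exp (-(k^2*(t/4))) := by
        apply Real.exp_le_exp.2
        nlinarith [sq_nonneg k]
      exact mul_le_mul h1 h2 (Real.exp_pos _).le (by positivity)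
    rw [Real.norm_eq_abs]
    calc |(-(k^2)/2 * Real.exp (-(k ^ 2 * s) / 2)) * Jn 0 (ξ*k) (Real.exp (-(x/ξ)))
          * Jn 0 (ξ*k) (Real.exp (-(y/ξ))) * (ξ * k * Real.sinh (Real.pi * ξ * k))|
        ≤ ((1+k^2)/2 * Real.exp (-(k^2*(t/4)))) * intK 0 (Real.exp (-(x/ξ)))
          * intK 0 (Real.exp (-(y/ξ))) * (ξ * (1+k^2) * Real.exp (Real.pi * ξ * |k|)) :=
          abs_mul4_le hexp (abs_Jn_le 0 (ξ*k) (Real.exp_pos _) le_rfl)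
            (abs_Jn_le 0 (ξ*k) (Real.exp_pos _) le_rfl) (weight_bound hξ k)
      _ = (intK 0 (Real.exp (-(x/ξ))) * intK 0 (Real.exp (-(y/ξ))) * (ξ/2))
          * ((1+k^2)^2 * (Real.exp (Real.pi*ξ*|k|) * Real.exp (-(k^2*(t/4))))) := by ring
  have hd : ∀ᵐ (k : ℝ), ∀ s ∈ Metric.ball t (t/2),
      HasDerivAt (fun s => Real.exp (-(k ^ 2 * s) / 2) * Jn 0 (ξ*k) (Real.exp (-(x/ξ)))
        * Jn 0 (ξ*k) (Real.exp (-(y/ξ))) * (ξ * k * Real.sinh (Real.pi * ξ * k)))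
        ((-(k^2)/2 * Real.exp (-(k ^ 2 * s) / 2)) * Jn 0 (ξ*k) (Real.exp (-(x/ξ)))
        * Jn 0 (ξ*k) (Real.exp (-(y/ξ))) * (ξ * k * Real.sinh (Real.pi * ξ * k))) s := by
    filter_upwards with k s _
    have h0 : HasDerivAt (fun s : ℝ => -(k^2*s)/2) (-(k^2)/2) s := by
      simpa using (((hasDerivAt_id s).const_mul (k^2)).neg.div_const 2)
    have h1 := ((h0.exp.mul_const (Jn 0 (ξ*k) (Real.exp (-(x/ξ))))).mul_const
      (Jn 0 (ξ*k) (Real.exp (-(y/ξ))))).mul_const (ξ * k * Real.sinh (Real.pi * ξ * k))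
    exact h1.congr_deriv (by ring)
  have key := hasDerivAt_integral_of_dominated_loc_of_deriv_le
    (F := fun s k => Real.exp (-(k ^ 2 * s) / 2) * Jn 0 (ξ*k) (Real.exp (-(x/ξ)))
      * Jn 0 (ξ*k) (Real.exp (-(y/ξ))) * (ξ * k * Real.sinh (Real.pi * ξ * k)))
    (F' := fun s k => (-(k^2)/2 * Real.exp (-(k ^ 2 * s) / 2)) * Jn 0 (ξ*k) (Real.exp (-(x/ξ)))
      * Jn 0 (ξ*k) (Real.exp (-(y/ξ))) * (ξ * k * Real.sinh (Real.pi * ξ * k)))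
    (x₀ := t) (s := Metric.ball t (t/2)) (μ := volume) (Metric.ball_mem_nhds _ (by positivity))
    (Eventually.of_forall fun s => by
      refine StronglyMeasurable.aestronglyMeasurable ?_
      exact (((Continuous.stronglyMeasurable (by fun_prop)).mul
        (sm_Jnk 0 ξ _)).mul (sm_Jnk 0 ξ _)).mul (Continuous.stronglyMeasurable (by fun_prop)))
    (integrable_KInt_base hξ ht y x) hm' hb
    (((integrable_master (show (0:ℝ) < t/4 by positivity) (Real.pi*ξ)
      (by positivity) 2).const_mul _))
    hd
  exact key.2

lemma zf_bounds {ξ : ℝ} (hξ : 0 < ξ) {x r : ℝ} (hr : r ∈ Metric.ball x 1) :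
    Real.exp (-((x+1)/ξ)) ≤ Real.exp (-(r/ξ)) ∧
      Real.exp (-(r/ξ)) ≤ Real.exp (-((x-1)/ξ)) := by
  have h := abs_lt.1 (by simpa [Real.dist_eq] using hr)
  constructor
  · apply Real.exp_le_exp.2
    rw [neg_le_neg_iff]
    exact (div_le_div_iff_of_pos_right hξ).2 (by linarith [h.2])
  · apply Real.exp_le_exp.2
    rw [neg_le_neg_iff]
    exact (div_le_div_iff_of_pos_right hξ).2 (by linarith [h.1])

lemma KInt_pack_x {ξ t : ℝ} (hξ : 0 < ξ) (ht : 0 < t) (y x : ℝ) :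
    Integrable (fun k : ℝ => Real.exp (-(k ^ 2 * t) / 2)
      * (Jn 1 (ξ*k) (Real.exp (-(x/ξ))) * (Real.exp (-(x/ξ))/ξ))
      * Jn 0 (ξ*k) (Real.exp (-(y/ξ))) * (ξ * k * Real.sinh (Real.pi * ξ * k)))
    ∧ HasDerivAt (fun r => KInt ξ t y r) (KIntx ξ t y x) x := by
  have hπ := Real.pi_pos
  set zmin := Real.exp (-((x+1)/ξ)) with hzmin
  set zmax := Real.exp (-((x-1)/ξ)) with hzmax
  have hm' : AEStronglyMeasurable (fun k : ℝ => Real.exp (-(k ^ 2 * t) / 2)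
      * (Jn 1 (ξ*k) (Real.exp (-(x/ξ))) * (Real.exp (-(x/ξ))/ξ))
      * Jn 0 (ξ*k) (Real.exp (-(y/ξ))) * (ξ * k * Real.sinh (Real.pi * ξ * k))) volume := by
    refine StronglyMeasurable.aestronglyMeasurable ?_
    exact (((Continuous.stronglyMeasurable (by fun_prop)).mul
      ((sm_Jnk 1 ξ _).mul stronglyMeasurable_const)).mul (sm_Jnk 0 ξ _)).mul
      (Continuous.stronglyMeasurable (by fun_prop))
  have hb : ∀ᵐ (k : ℝ), ∀ r ∈ Metric.ball x 1,
      ‖Real.exp (-(k ^ 2 * t) / 2)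
        * (Jn 1 (ξ*k) (Real.exp (-(r/ξ))) * (Real.exp (-(r/ξ))/ξ))
        * Jn 0 (ξ*k) (Real.exp (-(y/ξ))) * (ξ * k * Real.sinh (Real.pi * ξ * k))‖
      ≤ (intK 1 zmin * (zmax/ξ) * intK 0 (Real.exp (-(y/ξ))) * ξ)
        * ((1+k^2)^1 * (Real.exp (Real.pi*ξ*|k|) * Real.exp (-(k^2*(t/2))))) := by
    filter_upwards with k r hr
    obtain ⟨hz1, hz2⟩ := zf_bounds hξ hr
    have hphi : |Jn 1 (ξ*k) (Real.exp (-(r/ξ))) * (Real.exp (-(r/ξ))/ξ)|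
        ≤ intK 1 zmin * (zmax/ξ) := by
      rw [abs_mul, abs_of_nonneg (by positivity : (0:ℝ) ≤ Real.exp (-(r/ξ))/ξ)]
      exact mul_le_mul (abs_Jn_le 1 (ξ*k) (Real.exp_pos _) hz1)
        ((div_le_div_iff_of_pos_right hξ).2 hz2) (by positivity) (intK_nonneg 1 zmin)
    rw [Real.norm_eq_abs]
    calc |Real.exp (-(k ^ 2 * t) / 2)
          * (Jn 1 (ξ*k) (Real.exp (-(r/ξ))) * (Real.exp (-(r/ξ))/ξ))
          * Jn 0 (ξ*k) (Real.exp (-(y/ξ))) * (ξ * k * Real.sinh (Real.pi * ξ * k))|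
        ≤ Real.exp (-(k^2*(t/2))) * (intK 1 zmin * (zmax/ξ)) * intK 0 (Real.exp (-(y/ξ)))
          * (ξ * (1+k^2) * Real.exp (Real.pi * ξ * |k|)) :=
          abs_mul4_le (exp_t_eq t k) hphi (abs_Jn_le 0 (ξ*k) (Real.exp_pos _) le_rfl)
            (weight_bound hξ k)
      _ = _ := by ring
  have hd : ∀ᵐ (k : ℝ), ∀ r ∈ Metric.ball x 1,
      HasDerivAt (fun r => Real.exp (-(k ^ 2 * t) / 2) * Jn 0 (ξ*k) (Real.exp (-(r/ξ)))
        * Jn 0 (ξ*k) (Real.exp (-(y/ξ))) * (ξ * k * Real.sinh (Real.pi * ξ * k)))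
        (Real.exp (-(k ^ 2 * t) / 2)
          * (Jn 1 (ξ*k) (Real.exp (-(r/ξ))) * (Real.exp (-(r/ξ))/ξ))
          * Jn 0 (ξ*k) (Real.exp (-(y/ξ))) * (ξ * k * Real.sinh (Real.pi * ξ * k))) r := by
    filter_upwards with k r _
    have h1 := (((hasDerivAt_Jn_zf ξ 0 (ξ*k) r).const_mul
      (Real.exp (-(k ^ 2 * t) / 2))).mul_const
      (Jn 0 (ξ*k) (Real.exp (-(y/ξ))))).mul_const (ξ * k * Real.sinh (Real.pi * ξ * k))
    exact h1
  have key := hasDerivAt_integral_of_dominated_loc_of_deriv_le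
    (F := fun r k => Real.exp (-(k ^ 2 * t) / 2) * Jn 0 (ξ*k) (Real.exp (-(r/ξ)))
      * Jn 0 (ξ*k) (Real.exp (-(y/ξ))) * (ξ * k * Real.sinh (Real.pi * ξ * k)))
    (F' := fun r k => Real.exp (-(k ^ 2 * t) / 2)
      * (Jn 1 (ξ*k) (Real.exp (-(r/ξ))) * (Real.exp (-(r/ξ))/ξ))
      * Jn 0 (ξ*k) (Real.exp (-(y/ξ))) * (ξ * k * Real.sinh (Real.pi * ξ * k)))
    (x₀ := x) (s := Metric.ball x 1) (μ := volume) (Metric.ball_mem_nhds _ one_pos)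
    (Eventually.of_forall fun r => by
      refine StronglyMeasurable.aestronglyMeasurable ?_
      exact (((Continuous.stronglyMeasurable (by fun_prop)).mul
        (sm_Jnk 0 ξ _)).mul (sm_Jnk 0 ξ _)).mul (Continuous.stronglyMeasurable (by fun_prop)))
    (integrable_KInt_base hξ ht y x) hm' hb
    ((integrable_master (show (0:ℝ) < t/2 by positivity) (Real.pi*ξ) (by positivity) 1).const_mul _)
    hd
  exact key

lemma KInt_pack_xx {ξ t : ℝ} (hξ : 0 < ξ) (ht : 0 < t) (y x : ℝ) :
    Integrable (fun k : ℝ => Real.exp (-(k ^ 2 * t) / 2)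
      * (Jn 2 (ξ*k) (Real.exp (-(x/ξ))) * (Real.exp (-(x/ξ))/ξ)^2
        - Jn 1 (ξ*k) (Real.exp (-(x/ξ))) * (Real.exp (-(x/ξ))/ξ^2))
      * Jn 0 (ξ*k) (Real.exp (-(y/ξ))) * (ξ * k * Real.sinh (Real.pi * ξ * k)))
    ∧ HasDerivAt (fun r => KIntx ξ t y r) (KIntxx ξ t y x) x := by
  have hπ := Real.pi_pos
  set zmin := Real.exp (-((x+1)/ξ)) with hzmin
  set zmax := Real.exp (-((x-1)/ξ)) with hzmax
  have hm' : AEStronglyMeasurable (fun k : ℝ => Real.exp (-(k ^ 2 * t) / 2)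
      * (Jn 2 (ξ*k) (Real.exp (-(x/ξ))) * (Real.exp (-(x/ξ))/ξ)^2
        - Jn 1 (ξ*k) (Real.exp (-(x/ξ))) * (Real.exp (-(x/ξ))/ξ^2))
      * Jn 0 (ξ*k) (Real.exp (-(y/ξ))) * (ξ * k * Real.sinh (Real.pi * ξ * k))) volume := by
    refine StronglyMeasurable.aestronglyMeasurable ?_
    exact (((Continuous.stronglyMeasurable (by fun_prop)).mul
      (((sm_Jnk 2 ξ _).mul stronglyMeasurable_const).sub
        ((sm_Jnk 1 ξ _).mul stronglyMeasurable_const))).mul (sm_Jnk 0 ξ _)).mul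
      (Continuous.stronglyMeasurable (by fun_prop))
  have hb : ∀ᵐ (k : ℝ), ∀ r ∈ Metric.ball x 1,
      ‖Real.exp (-(k ^ 2 * t) / 2)
        * (Jn 2 (ξ*k) (Real.exp (-(r/ξ))) * (Real.exp (-(r/ξ))/ξ)^2
          - Jn 1 (ξ*k) (Real.exp (-(r/ξ))) * (Real.exp (-(r/ξ))/ξ^2))
        * Jn 0 (ξ*k) (Real.exp (-(y/ξ))) * (ξ * k * Real.sinh (Real.pi * ξ * k))‖
      ≤ ((intK 2 zmin * (zmax/ξ)^2 + intK 1 zmin * (zmax/ξ^2))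
          * intK 0 (Real.exp (-(y/ξ))) * ξ)
        * ((1+k^2)^1 * (Real.exp (Real.pi*ξ*|k|) * Real.exp (-(k^2*(t/2))))) := by
    filter_upwards with k r hr
    obtain ⟨hz1, hz2⟩ := zf_bounds hξ hr
    have hz0 : (0:ℝ) < Real.exp (-(r/ξ)) := Real.exp_pos _
    have hphi : |Jn 2 (ξ*k) (Real.exp (-(r/ξ))) * (Real.exp (-(r/ξ))/ξ)^2
          - Jn 1 (ξ*k) (Real.exp (-(r/ξ))) * (Real.exp (-(r/ξ))/ξ^2)|
        ≤ intK 2 zmin * (zmax/ξ)^2 + intK 1 zmin * (zmax/ξ^2) := by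
      refine (abs_sub _ _).trans (add_le_add ?_ ?_)
      · rw [abs_mul, abs_of_nonneg (by positivity : (0:ℝ) ≤ (Real.exp (-(r/ξ))/ξ)^2)]
        refine mul_le_mul (abs_Jn_le 2 (ξ*k) (Real.exp_pos _) hz1) ?_ (by positivity)
          (intK_nonneg 2 zmin)
        have h1 : Real.exp (-(r/ξ))/ξ ≤ zmax/ξ := (div_le_div_iff_of_pos_right hξ).2 hz2
        have h0 : (0:ℝ) ≤ Real.exp (-(r/ξ))/ξ := by positivity
        nlinarith
      · rw [abs_mul, abs_of_nonneg (by positivity : (0:ℝ) ≤ Real.exp (-(r/ξ))/ξ^2)]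
        refine mul_le_mul (abs_Jn_le 1 (ξ*k) (Real.exp_pos _) hz1) ?_ (by positivity)
          (intK_nonneg 1 zmin)
        exact (div_le_div_iff_of_pos_right (by positivity)).2 hz2
    rw [Real.norm_eq_abs]
    calc |Real.exp (-(k ^ 2 * t) / 2)
          * (Jn 2 (ξ*k) (Real.exp (-(r/ξ))) * (Real.exp (-(r/ξ))/ξ)^2
            - Jn 1 (ξ*k) (Real.exp (-(r/ξ))) * (Real.exp (-(r/ξ))/ξ^2))
          * Jn 0 (ξ*k) (Real.exp (-(y/ξ))) * (ξ * k * Real.sinh (Real.pi * ξ * k))|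
        ≤ Real.exp (-(k^2*(t/2)))
          * (intK 2 zmin * (zmax/ξ)^2 + intK 1 zmin * (zmax/ξ^2))
          * intK 0 (Real.exp (-(y/ξ)))
          * (ξ * (1+k^2) * Real.exp (Real.pi * ξ * |k|)) :=
          abs_mul4_le (exp_t_eq t k) hphi (abs_Jn_le 0 (ξ*k) (Real.exp_pos _) le_rfl)
            (weight_bound hξ k)
      _ = _ := by ring
  have hd : ∀ᵐ (k : ℝ), ∀ r ∈ Metric.ball x 1,
      HasDerivAt (fun r => Real.exp (-(k ^ 2 * t) / 2)
        * (Jn 1 (ξ*k) (Real.exp (-(r/ξ))) * (Real.exp (-(r/ξ))/ξ))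
        * Jn 0 (ξ*k) (Real.exp (-(y/ξ))) * (ξ * k * Real.sinh (Real.pi * ξ * k)))
        (Real.exp (-(k ^ 2 * t) / 2)
          * (Jn 2 (ξ*k) (Real.exp (-(r/ξ))) * (Real.exp (-(r/ξ))/ξ)^2
            - Jn 1 (ξ*k) (Real.exp (-(r/ξ))) * (Real.exp (-(r/ξ))/ξ^2))
          * Jn 0 (ξ*k) (Real.exp (-(y/ξ))) * (ξ * k * Real.sinh (Real.pi * ξ * k))) r := by
    filter_upwards with k r _
    exact (((hasDerivAt_phi1 ξ (ξ*k) r).const_mul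
      (Real.exp (-(k ^ 2 * t) / 2))).mul_const
      (Jn 0 (ξ*k) (Real.exp (-(y/ξ))))).mul_const (ξ * k * Real.sinh (Real.pi * ξ * k))
  have key := hasDerivAt_integral_of_dominated_loc_of_deriv_le
    (F := fun r k => Real.exp (-(k ^ 2 * t) / 2)
      * (Jn 1 (ξ*k) (Real.exp (-(r/ξ))) * (Real.exp (-(r/ξ))/ξ))
      * Jn 0 (ξ*k) (Real.exp (-(y/ξ))) * (ξ * k * Real.sinh (Real.pi * ξ * k)))
    (F' := fun r k => Real.exp (-(k ^ 2 * t) / 2)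
      * (Jn 2 (ξ*k) (Real.exp (-(r/ξ))) * (Real.exp (-(r/ξ))/ξ)^2
        - Jn 1 (ξ*k) (Real.exp (-(r/ξ))) * (Real.exp (-(r/ξ))/ξ^2))
      * Jn 0 (ξ*k) (Real.exp (-(y/ξ))) * (ξ * k * Real.sinh (Real.pi * ξ * k)))
    (x₀ := x) (s := Metric.ball x 1) (μ := volume) (Metric.ball_mem_nhds _ one_pos)
    (Eventually.of_forall fun r => by
      refine StronglyMeasurable.aestronglyMeasurable ?_
      exact (((Continuous.stronglyMeasurable (by fun_prop)).mul
        ((sm_Jnk 1 ξ _).mul stronglyMeasurable_const)).mul (sm_Jnk 0 ξ _)).mul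
        (Continuous.stronglyMeasurable (by fun_prop)))
    (KInt_pack_x hξ ht y x).1 hm' hb
    ((integrable_master (show (0:ℝ) < t/2 by positivity) (Real.pi*ξ) (by positivity) 1).const_mul _)
    hd
  exact key

lemma KIntt_eq {ξ t : ℝ} (hξ : 0 < ξ) (ht : 0 < t) (y x : ℝ) :
    KIntt ξ t y x = (1/2) * KIntxx ξ t y x
      - ((Real.exp (-(x/ξ)))^2/(2*ξ^2)) * KInt ξ t y x := by
  have hbase := integrable_KInt_base hξ ht y x
  have hxx := (KInt_pack_xx hξ ht y x).1
  unfold KIntt KIntxx KInt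
  have hptw : (fun k : ℝ => (-(k^2)/2 * Real.exp (-(k ^ 2 * t) / 2))
        * Jn 0 (ξ*k) (Real.exp (-(x/ξ))) * Jn 0 (ξ*k) (Real.exp (-(y/ξ)))
        * (ξ * k * Real.sinh (Real.pi * ξ * k)))
      = fun k : ℝ => (1/2) * (Real.exp (-(k ^ 2 * t) / 2)
        * (Jn 2 (ξ*k) (Real.exp (-(x/ξ))) * (Real.exp (-(x/ξ))/ξ)^2
          - Jn 1 (ξ*k) (Real.exp (-(x/ξ))) * (Real.exp (-(x/ξ))/ξ^2))
        * Jn 0 (ξ*k) (Real.exp (-(y/ξ))) * (ξ * k * Real.sinh (Real.pi * ξ * k)))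
      - ((Real.exp (-(x/ξ)))^2/(2*ξ^2)) * (Real.exp (-(k ^ 2 * t) / 2)
        * Jn 0 (ξ*k) (Real.exp (-(x/ξ))) * Jn 0 (ξ*k) (Real.exp (-(y/ξ)))
        * (ξ * k * Real.sinh (Real.pi * ξ * k))) := by
    funext k
    rw [phi2_eq hξ.ne' k x]
    ring
  rw [hptw, integral_sub (hxx.const_mul _) (hbase.const_mul _),
    integral_const_mul, integral_const_mul]

lemma K0_pos {z : ℝ} (hz : 0 < z) : 0 < K0 z := by
  unfold K0
  rw [setIntegral_pos_iff_support_of_nonneg_ae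
    (Eventually.of_forall fun u => (Real.exp_pos _).le)
    (by simpa using integrableOn_coshpow_exp hz 0)]
  have hsupp : Function.support (fun u : ℝ => Real.exp (-(z * Real.cosh u))) = Set.univ := by
    ext u; simp [Real.exp_ne_zero]
  rw [hsupp, Set.univ_inter, Real.volume_Ioi]
  simp

/-- The conditioned killing Brownian motion has the Matsumoto–Yor generator:
`u(t,x) = (K₀(e^{-y/ξ})/K₀(e^{-x/ξ})) Q_ξ(t,y|x)` satisfies
`∂u/∂t = (1/2) ∂²u/∂x² + (d/dx log K₀(e^{-x/ξ})) ∂u/∂x`. -/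
theorem conditioned_process_matsumoto_yor_generator (ξ : ℝ) (hξ : 0 < ξ) (y : ℝ)
    (t : ℝ) (ht : 0 < t) (x : ℝ) :
    deriv (fun s => (K0 (Real.exp (-(y / ξ))) / K0 (Real.exp (-(x / ξ)))) * Qxi ξ s y x) t
      = (1 / 2) *
          deriv (deriv (fun r =>
            (K0 (Real.exp (-(y / ξ))) / K0 (Real.exp (-(r / ξ)))) * Qxi ξ t y r)) x
        + deriv (fun r => Real.log (K0 (Real.exp (-(r / ξ))))) x *
          deriv (fun r =>
            (K0 (Real.exp (-(y / ξ))) / K0 (Real.exp (-(r / ξ)))) * Qxi ξ t y r) x := by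
  have hπ := Real.pi_pos
  simp only [Qxi_eq]
  have hK : ∀ r : ℝ, 0 < K0 (Real.exp (-(r/ξ))) := fun r => K0_pos (Real.exp_pos _)
  have hh : ∀ r : ℝ, HasDerivAt (fun r' => K0 (Real.exp (-(r'/ξ))))
      (Jn 1 0 (Real.exp (-(r/ξ))) * (Real.exp (-(r/ξ))/ξ)) r := by
    intro r
    have heq : (fun r' : ℝ => K0 (Real.exp (-(r'/ξ))))
        = fun r' => Jn 0 0 (Real.exp (-(r'/ξ))) := funext fun r' => K0_eq _
    rw [heq]; exact hasDerivAt_Jn_zf ξ 0 0 r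
  have hQx : ∀ r : ℝ, HasDerivAt (fun r' => 1/Real.pi^2 * KInt ξ t y r')
      (1/Real.pi^2 * KIntx ξ t y r) r := fun r => ((KInt_pack_x hξ ht y r).2.const_mul _)
  have hQxx : HasDerivAt (fun r => 1/Real.pi^2 * KIntx ξ t y r)
      (1/Real.pi^2 * KIntxx ξ t y x) x := (KInt_pack_xx hξ ht y x).2.const_mul _
  have hQt : HasDerivAt (fun s => 1/Real.pi^2 * KInt ξ s y x)
      (1/Real.pi^2 * KIntt ξ t y x) t := (hasDerivAt_KInt_t hξ ht y x).const_mul _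
  -- LHS
  have hL : deriv (fun s => K0 (Real.exp (-(y/ξ))) / K0 (Real.exp (-(x/ξ)))
      * (1/Real.pi^2 * KInt ξ s y x)) t
      = K0 (Real.exp (-(y/ξ))) / K0 (Real.exp (-(x/ξ))) * (1/Real.pi^2 * KIntt ξ t y x) :=
    (hQt.const_mul _).deriv
  -- first x-derivative of u
  have hu : ∀ r : ℝ, HasDerivAt (fun r' => K0 (Real.exp (-(y/ξ))) / K0 (Real.exp (-(r'/ξ)))
      * (1/Real.pi^2 * KInt ξ t y r'))
      ((0 * K0 (Real.exp (-(r/ξ))) - K0 (Real.exp (-(y/ξ)))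
          * (Jn 1 0 (Real.exp (-(r/ξ))) * (Real.exp (-(r/ξ))/ξ))) / (K0 (Real.exp (-(r/ξ))))^2
          * (1/Real.pi^2 * KInt ξ t y r)
        + K0 (Real.exp (-(y/ξ))) / K0 (Real.exp (-(r/ξ))) * (1/Real.pi^2 * KIntx ξ t y r)) r :=
    fun r => ((hasDerivAt_const r _).div (hh r) (hK r).ne').mul (hQx r)
  have hderiv1 : deriv (fun r' => K0 (Real.exp (-(y/ξ))) / K0 (Real.exp (-(r'/ξ)))
      * (1/Real.pi^2 * KInt ξ t y r'))
      = fun r => (0 * K0 (Real.exp (-(r/ξ))) - K0 (Real.exp (-(y/ξ)))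
          * (Jn 1 0 (Real.exp (-(r/ξ))) * (Real.exp (-(r/ξ))/ξ))) / (K0 (Real.exp (-(r/ξ))))^2
          * (1/Real.pi^2 * KInt ξ t y r)
        + K0 (Real.exp (-(y/ξ))) / K0 (Real.exp (-(r/ξ))) * (1/Real.pi^2 * KIntx ξ t y r) :=
    funext fun r => (hu r).deriv
  -- second derivative pieces at x
  have hN : HasDerivAt (fun r => 0 * K0 (Real.exp (-(r/ξ))) - K0 (Real.exp (-(y/ξ)))
      * (Jn 1 0 (Real.exp (-(r/ξ))) * (Real.exp (-(r/ξ))/ξ)))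
      (0 * (Jn 1 0 (Real.exp (-(x/ξ))) * (Real.exp (-(x/ξ))/ξ)) - K0 (Real.exp (-(y/ξ)))
        * (Jn 2 0 (Real.exp (-(x/ξ))) * (Real.exp (-(x/ξ))/ξ)^2
          - Jn 1 0 (Real.exp (-(x/ξ))) * (Real.exp (-(x/ξ))/ξ^2))) x :=
    ((hh x).const_mul 0).sub ((hasDerivAt_phi1 ξ 0 x).const_mul _)
  have hD := (hh x).fun_pow 2
  have hA := hN.fun_div hD (pow_ne_zero 2 (hK x).ne')
  have hB : HasDerivAt (fun r => K0 (Real.exp (-(y/ξ))) / K0 (Real.exp (-(r/ξ))))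
      ((0 * K0 (Real.exp (-(x/ξ))) - K0 (Real.exp (-(y/ξ)))
        * (Jn 1 0 (Real.exp (-(x/ξ))) * (Real.exp (-(x/ξ))/ξ))) / (K0 (Real.exp (-(x/ξ))))^2) x :=
    (hasDerivAt_const x _).div (hh x) (hK x).ne'
  have hU2 := (hA.fun_mul (hQx x)).fun_add (hB.fun_mul hQxx)
  have hd2 := hU2.deriv
  -- log derivative
  have hlog : deriv (fun r => Real.log (K0 (Real.exp (-(r/ξ))))) x
      = (Jn 1 0 (Real.exp (-(x/ξ))) * (Real.exp (-(x/ξ))/ξ)) / K0 (Real.exp (-(x/ξ))) :=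
    ((hh x).log (hK x).ne').deriv
  rw [hL, hlog, (hu x).deriv, hderiv1, hd2]
  -- algebra
  have hode : Jn 2 0 (Real.exp (-(x/ξ))) * (Real.exp (-(x/ξ))/ξ)^2
      - Jn 1 0 (Real.exp (-(x/ξ))) * (Real.exp (-(x/ξ))/ξ^2)
      = ((Real.exp (-(x/ξ)))^2/ξ^2) * K0 (Real.exp (-(x/ξ))) := by
    have h := phi2_eq hξ.ne' 0 x
    rw [K0_eq]
    simpa using h
  have htt := KIntt_eq hξ ht y x
  rw [hode, htt]
  have hKx := (hK x).ne'
  set zxv := Real.exp (-(x/ξ)) with hzxv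
  set Ky := K0 (Real.exp (-(y/ξ))) with hKy
  set Kx := K0 zxv with hKxv
  set J1 := Jn 1 0 zxv with hJ1
  set QI := KInt ξ t y x with hQI
  set QIX := KIntx ξ t y x with hQIX
  set QIXX := KIntxx ξ t y x with hQIXX
  push_cast
  field_simp
  ring
end
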